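/- arXiv:1510.05130 — 9 statements merged into one kernel-verified Lean document; each statement's English description precedes it below -/
import Mathlib

section
/- Let A = [a_ij] ∈ ℂ^{n×n}, n ≥ 2, be a DD matrix such that either T(A) = ∅, or for each i₀ ∈ T(A) there exists a nonzero elements chain a_{i₀i₁}, a_{i₁i₂}, …, a_{i_{r-1}i_r} with i_r ∈ N \ T(A). Then A is nonsingular. -/
open scoped BigOperators

noncomputable section

/-- Deleted `i`-th row sum of `|A|`, restricted to the index set `S`
    (i.e. `r_i^S(A) = ∑_{j ∈ S \ {i}} |a_{ij}|`). -/
def rowSumOn {ι : Type*} [Fintype ι] [DecidableEq ι]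
    (A : Matrix ι ι ℂ) (S : Finset ι) (i : ι) : ℝ :=
  ∑ j ∈ S.erase i, ‖A i j‖

/-- Deleted `i`-th row sum `r_i(A) = ∑_{j ≠ i} |a_{ij}|`. -/
def rowSum {ι : Type*} [Fintype ι] [DecidableEq ι]
    (A : Matrix ι ι ℂ) (i : ι) : ℝ :=
  rowSumOn A Finset.univ i

/-- `A` is strictly diagonally dominant (SDD). -/
def IsSDD {ι : Type*} [Fintype ι] [DecidableEq ι] (A : Matrix ι ι ℂ) : Prop :=
  ∀ i, rowSum A i < ‖A i i‖

/-- `A` is diagonally dominant (DD). -/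
def IsDD {ι : Type*} [Fintype ι] [DecidableEq ι] (A : Matrix ι ι ℂ) : Prop :=
  ∀ i, rowSum A i ≤ ‖A i i‖

/-- `A` is DD+ : diagonally dominant with at least one strictly dominant row. -/
def IsDDplus {ι : Type*} [Fintype ι] [DecidableEq ι] (A : Matrix ι ι ℂ) : Prop :=
  IsDD A ∧ ∃ i, rowSum A i < ‖A i i‖

/-- `A` is an H-matrix: there is a diagonal matrix `D` with positive diagonal
    entries such that `A * D` is SDD. -/
def IsHMatrix {ι : Type*} [Fintype ι] [DecidableEq ι] (A : Matrix ι ι ℂ) : Prop :=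
  ∃ d : ι → ℝ, (∀ i, 0 < d i) ∧ IsSDD (A * Matrix.diagonal fun i => (d i : ℂ))

/-- `T(A)`: the set of indices of non-SDD rows of `A`. -/
def TSet {ι : Type*} [Fintype ι] [DecidableEq ι] (A : Matrix ι ι ℂ) : Finset ι :=
  Finset.univ.filter fun i => ‖A i i‖ ≤ rowSum A i

/-- The principal submatrix `A|_{M²}` of `A` corresponding to the index set `M`. -/
def subMat {ι : Type*} [Fintype ι] [DecidableEq ι]
    (A : Matrix ι ι ℂ) (M : Finset ι) : Matrix {i // i ∈ M} {i // i ∈ M} ℂ :=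
  Matrix.of fun i j => A i.val j.val

/-- There exists a nonzero elements chain `a_{i₀i₁}, a_{i₁i₂}, …, a_{i_{r-1}i_r}`
    starting at `i₀` and ending at some `i_r ∉ T(A)`. -/
def HasChainOut {ι : Type*} [Fintype ι] [DecidableEq ι]
    (A : Matrix ι ι ℂ) (i₀ : ι) : Prop :=
  ∃ (r : ℕ) (c : Fin (r + 1) → ι), 0 < r ∧ c 0 = i₀ ∧
    (∀ k : Fin r, A (c k.castSucc) (c k.succ) ≠ 0) ∧ c (Fin.last r) ∉ TSet A

/-- `S` is an interwoven set of indices for `A`: `S` is a proper subset of `N`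
    and either `|S| ≤ 1`, or `|S| = s > 1` and there exist distinct
    `p₁,…,p_{s-1} ∈ S` and `q₁,…,q_{s-1}` with `q₁ ∈ N \ S`, `a_{p₁q₁} ≠ 0`, and
    `q_i ∈ (N \ S) ∪ {p₁,…,p_{i-1}}`, `a_{p_iq_i} ≠ 0` for `i = 2,…,s-1`. -/
def Interwoven {ι : Type*} [Fintype ι] [DecidableEq ι]
    (A : Matrix ι ι ℂ) (S : Finset ι) : Prop :=
  S ⊂ Finset.univ ∧
    (S.card ≤ 1 ∨
      (1 < S.card ∧ ∃ p q : Fin (S.card - 1) → ι,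
        Function.Injective p ∧ (∀ i, p i ∈ S) ∧
        ∀ i, A (p i) (q i) ≠ 0 ∧ (q i ∉ S ∨ ∃ j, j < i ∧ q i = p j)))

/-- The comparison matrix `ℳ(A)`. -/
def CompMat {ι : Type*} [Fintype ι] [DecidableEq ι] (A : Matrix ι ι ℂ) : Matrix ι ι ℝ :=
  Matrix.of fun i j => if i = j then ‖A i i‖ else -‖A i j‖


/-- Shivakumar–Chew. A DD matrix `A ∈ ℂⁿˣⁿ`, `n ≥ 2`, such that
`T(A) = ∅` or every `i₀ ∈ T(A)` has a nonzero elements chain ending outside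
`T(A)`, is nonsingular. -/
theorem shivakumar_chew_nonsingular (n : ℕ) (hn : 2 ≤ n)
    (A : Matrix (Fin n) (Fin n) ℂ) (hDD : IsDD A)
    (hchain : TSet A = ∅ ∨ ∀ i₀ ∈ TSet A, HasChainOut A i₀) :
    A.det ≠ 0 := by
  intro hdet
  obtain ⟨x, hx0, hx⟩ := Matrix.exists_mulVec_eq_zero_iff.mpr hdet
  have hne : (Finset.univ : Finset (Fin n)).Nonempty := ⟨⟨0, by omega⟩, Finset.mem_univ _⟩
  set M : ℝ := Finset.univ.sup' hne (fun i => ‖x i‖) with hM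
  have hle : ∀ j, ‖x j‖ ≤ M := fun j => by
    rw [hM]; exact Finset.le_sup' (fun i => ‖x i‖) (Finset.mem_univ j)
  have hMpos : 0 < M := by
    obtain ⟨j, hj⟩ := Function.ne_iff.mp hx0
    exact lt_of_lt_of_le (by simpa using (norm_pos_iff.mpr hj)) (hle j)
  have key : ∀ i, ‖x i‖ = M →
      (‖A i i‖ ≤ rowSum A i ∧ ∀ j, A i j ≠ 0 → ‖x j‖ = M) := by
    intro i hi
    have hrow : ∑ j, A i j * x j = 0 := by
      have := congrFun hx i
      simpa [Matrix.mulVec, dotProduct] using this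
    have hsum : A i i * x i + ∑ j ∈ Finset.univ.erase i, A i j * x j = 0 := by
      rw [Finset.add_sum_erase Finset.univ (fun j => A i j * x j) (Finset.mem_univ i), hrow]
    have hsplit : A i i * x i = -∑ j ∈ Finset.univ.erase i, A i j * x j :=
      eq_neg_of_add_eq_zero_left hsum
    have h1 : ‖A i i‖ * M ≤
        ∑ j ∈ Finset.univ.erase i, ‖A i j‖ * ‖x j‖ := by
      calc ‖A i i‖ * M = ‖A i i * x i‖ := by rw [norm_mul, hi]
        _ = ‖∑ j ∈ Finset.univ.erase i, A i j * x j‖ := by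
              rw [hsplit, norm_neg]
        _ ≤ ∑ j ∈ Finset.univ.erase i, ‖A i j * x j‖ :=
              norm_sum_le _ _
        _ = ∑ j ∈ Finset.univ.erase i, ‖A i j‖ * ‖x j‖ := by
              simp [norm_mul]
    have h2 : ∑ j ∈ Finset.univ.erase i, ‖A i j‖ * ‖x j‖ ≤
        ∑ j ∈ Finset.univ.erase i, ‖A i j‖ * M :=
      Finset.sum_le_sum fun j _ =>
        mul_le_mul_of_nonneg_left (hle j) (norm_nonneg _)
    have h3 : ∑ j ∈ Finset.univ.erase i, ‖A i j‖ * M = rowSum A i * M := by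
      rw [rowSum, rowSumOn, Finset.sum_mul]
    have hdd := hDD i
    have h4 : rowSum A i * M ≤ ‖A i i‖ * M :=
      mul_le_mul_of_nonneg_right hdd hMpos.le
    constructor
    · exact le_of_mul_le_mul_right (by linarith) hMpos
    · intro j hj
      by_cases hji : j = i
      · rw [hji]; exact hi
      · have hmem : j ∈ Finset.univ.erase i := Finset.mem_erase.mpr ⟨hji, Finset.mem_univ j⟩
        have hzero : ∑ k ∈ Finset.univ.erase i,
            ‖A i k‖ * (M - ‖x k‖) = 0 := by
          have : ∑ k ∈ Finset.univ.erase i, ‖A i k‖ * (M - ‖x k‖) =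
              (∑ k ∈ Finset.univ.erase i, ‖A i k‖ * M) -
              ∑ k ∈ Finset.univ.erase i, ‖A i k‖ * ‖x k‖ := by
            rw [← Finset.sum_sub_distrib]
            exact Finset.sum_congr rfl fun k _ => by ring
          rw [this, h3]
          rw [h3] at h2
          linarith
        have hterm := (Finset.sum_eq_zero_iff_of_nonneg fun k _ =>
          mul_nonneg (norm_nonneg _) (by linarith [hle k])).mp hzero j hmem
        have habs : ‖A i j‖ ≠ 0 := fun h => hj (by simpa using h)
        have : M - ‖x j‖ = 0 := by
          rcases mul_eq_zero.mp hterm with h | h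
          · exact absurd h habs
          · exact h
        linarith
  have hTi : ∀ i, ‖x i‖ = M → i ∈ TSet A := by
    intro i hi
    simp only [TSet, Finset.mem_filter, Finset.mem_univ, true_and]
    exact (key i hi).1
  obtain ⟨i₀, -, hi₀⟩ := Finset.exists_mem_eq_sup' hne (fun i => ‖x i‖)
  have hi₀M : ‖x i₀‖ = M := hi₀.symm
  rcases hchain with h | h
  · have := hTi i₀ hi₀M
    rw [h] at this
    exact absurd this (Finset.notMem_empty _)
  · obtain ⟨r, c, hr, hc0, hstep, hout⟩ := h i₀ (hTi i₀ hi₀M)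
    have hall : ∀ k : Fin (r + 1), ‖x (c k)‖ = M := by
      intro k
      induction k using Fin.induction with
      | zero => rw [hc0]; exact hi₀M
      | succ k ih => exact (key (c k.castSucc) ih).2 _ (hstep k)
    exact hout (hTi _ (hall (Fin.last r)))

end
end

section
/- Let A = [a_ij] ∈ ℂ^{n×n}, n ≥ 2, be a DD matrix such that either T(A) = ∅, or for each i₀ ∈ T(A) there exists a nonzero elements chain a_{i₀i₁}, a_{i₁i₂}, …, a_{i_{r-1}i_r} with i_r ∈ N \ T(A). Then A is an H-matrix. -/
open scoped BigOperators

noncomputable section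

section Aux

variable {n : ℕ}

/-- There is a chain of `r` nonzero steps from `i` to an index outside `T(A)`. -/
def chainTo (A : Matrix (Fin n) (Fin n) ℂ) : ℕ → Fin n → Prop
  | 0, i => i ∉ TSet A
  | (r+1), i => ∃ j, A i j ≠ 0 ∧ chainTo A r j

lemma chainTo_of_chain (A : Matrix (Fin n) (Fin n) ℂ) :
    ∀ (r : ℕ) (c : Fin (r + 1) → Fin n),
      (∀ k : Fin r, A (c k.castSucc) (c k.succ) ≠ 0) →
      c (Fin.last r) ∉ TSet A → chainTo A r (c 0) := by
  intro r
  induction r with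
  | zero =>
      intro c _ hlast
      have h0 : (0 : Fin 1) = Fin.last 0 := rfl
      rw [chainTo, h0]
      exact hlast
  | succ r ih =>
      intro c hedge hlast
      refine ⟨c 1, ?_, ?_⟩
      · have := hedge 0
        simpa using this
      · have := ih (fun k => c k.succ) ?_ ?_
        · simpa using this
        · intro k
          have := hedge k.succ
          simpa only [Fin.succ_castSucc] using this
        · simpa [Fin.succ_last] using hlast

end Aux

/-- A DD matrix `A ∈ ℂⁿˣⁿ`, `n ≥ 2`, such that `T(A) = ∅` or
every `i₀ ∈ T(A)` has a nonzero elements chain ending outside `T(A)`,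
is an H-matrix. -/
theorem shivakumar_chew_hmatrix (n : ℕ) (hn : 2 ≤ n)
    (A : Matrix (Fin n) (Fin n) ℂ) (hDD : IsDD A)
    (hchain : TSet A = ∅ ∨ ∀ i₀ ∈ TSet A, HasChainOut A i₀) :
    IsHMatrix A := by
  classical
  by_cases hT : TSet A = ∅
  · refine ⟨fun _ => 1, fun _ => one_pos, ?_⟩
    intro i
    have hi : i ∉ TSet A := by simp [hT]
    simp only [TSet, Finset.mem_filter, Finset.mem_univ, true_and, not_le] at hi
    simpa only [Complex.ofReal_one, Matrix.diagonal_one, Matrix.mul_one] using hi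
  · have hchain' : ∀ i₀ ∈ TSet A, HasChainOut A i₀ := hchain.resolve_left hT
    -- every index has a chain to outside T
    have hex : ∀ i, ∃ r, chainTo A r i := by
      intro i
      by_cases hi : i ∈ TSet A
      · obtain ⟨r, c, _, hc0, hedge, hlast⟩ := hchain' i hi
        exact ⟨r, hc0 ▸ chainTo_of_chain A r c hedge hlast⟩
      · exact ⟨0, hi⟩
    set L : Fin n → ℕ := fun i => Nat.find (hex i) with hLdef
    have hL : ∀ i, chainTo A (L i) i := fun i => Nat.find_spec (hex i)
    have hLmin : ∀ i r, chainTo A r i → L i ≤ r := fun i r h => Nat.find_min' (hex i) h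
    -- constants
    set C : ℝ := ∑ k, ‖A k k‖ with hCdef
    have hC : ∀ i, ‖A i i‖ ≤ C := by
      intro i
      rw [hCdef]
      exact Finset.single_le_sum (f := fun k => ‖A k k‖)
        (fun k _ => norm_nonneg _) (Finset.mem_univ i)
    have hC0 : (0:ℝ) ≤ C := Finset.sum_nonneg fun k _ => norm_nonneg _
    -- nonzero entries
    set E : Finset (Fin n × Fin n) :=
      Finset.univ.filter (fun p : Fin n × Fin n => A p.1 p.2 ≠ 0) with hEdef
    have hTne : ∃ i₀, i₀ ∈ TSet A := by
      obtain ⟨i₀, hi₀⟩ := Finset.nonempty_iff_ne_empty.2 hT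
      exact ⟨i₀, hi₀⟩
    have hEne : E.Nonempty := by
      obtain ⟨i₀, hi₀⟩ := hTne
      obtain ⟨r, c, hr, _, hedge, _⟩ := hchain' i₀ hi₀
      refine ⟨(c (⟨0, hr⟩ : Fin r).castSucc, c (⟨0, hr⟩ : Fin r).succ), ?_⟩
      rw [hEdef]
      exact Finset.mem_filter.2 ⟨Finset.mem_univ _, hedge ⟨0, hr⟩⟩
    set μ : ℝ := E.inf' hEne (fun p => ‖A p.1 p.2‖) with hμdef
    have hμpos : 0 < μ := by
      rw [hμdef, Finset.lt_inf'_iff]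
      intro p hp
      rw [hEdef] at hp
      exact norm_pos_iff.2 (Finset.mem_filter.1 hp).2
    have hμle : ∀ i j, A i j ≠ 0 → μ ≤ ‖A i j‖ := by
      intro i j hij
      have hmem : (i, j) ∈ E := by
        rw [hEdef]; exact Finset.mem_filter.2 ⟨Finset.mem_univ _, hij⟩
      rw [hμdef]
      exact Finset.inf'_le _ hmem
    set t : ℝ := min (μ / (C + 1)) 1 with htdef
    have hCpos : (0:ℝ) < C + 1 := by linarith
    have ht0 : 0 < t := lt_min (div_pos hμpos hCpos) one_pos
    have ht1 : t ≤ 1 := min_le_right _ _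
    have htC1 : t * (C + 1) ≤ μ := by
      have h1 : t ≤ μ / (C + 1) := min_le_left _ _
      exact (le_div_iff₀ hCpos).1 h1
    have htkey : ∀ i, t * ‖A i i‖ < μ := by
      intro i
      have h1 : t * ‖A i i‖ ≤ t * C :=
        mul_le_mul_of_nonneg_left (hC i) ht0.le
      nlinarith [ht0]
    -- strictly dominant rows
    set S : Finset (Fin n) := Finset.univ.filter (fun i => i ∉ TSet A) with hSdef
    have hSne : S.Nonempty := by
      obtain ⟨i₀, hi₀⟩ := hTne
      obtain ⟨r, c, _, _, _, hlast⟩ := hchain' i₀ hi₀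
      refine ⟨c (Fin.last r), ?_⟩
      rw [hSdef]
      exact Finset.mem_filter.2 ⟨Finset.mem_univ _, hlast⟩
    have hstrict : ∀ i ∉ TSet A, rowSum A i < ‖A i i‖ := by
      intro i hi
      simp only [TSet, Finset.mem_filter, Finset.mem_univ, true_and, not_le] at hi
      exact hi
    set ε : ℝ := min (1/2)
      (S.inf' hSne (fun i => (‖A i i‖ - rowSum A i) / (‖A i i‖ + 1)))
      with hεdef
    have hεpos : 0 < ε := by
      refine lt_min (by norm_num) ?_
      rw [Finset.lt_inf'_iff]
      intro i hi
      rw [hSdef] at hi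
      have h1 := hstrict i (Finset.mem_filter.1 hi).2
      have h2 : (0:ℝ) < ‖A i i‖ + 1 :=
        by have := norm_nonneg (A i i); linarith
      exact div_pos (by linarith) h2
    have hεhalf : ε ≤ 1/2 := min_le_left _ _
    have hεrow : ∀ i ∉ TSet A, ε * (‖A i i‖ + 1) ≤ ‖A i i‖ - rowSum A i := by
      intro i hi
      have h2 : (0:ℝ) < ‖A i i‖ + 1 :=
        by have := norm_nonneg (A i i); linarith
      have hmem : i ∈ S := by
        rw [hSdef]; exact Finset.mem_filter.2 ⟨Finset.mem_univ _, hi⟩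
      have h1 : ε ≤ (‖A i i‖ - rowSum A i) / (‖A i i‖ + 1) :=
        le_trans (min_le_right _ _) (Finset.inf'_le _ hmem)
      exact (le_div_iff₀ h2).1 h1
    -- the scaling
    set d : Fin n → ℝ := fun i => 1 - ε * t ^ (L i) with hddef
    have htpow1 : ∀ i, t ^ (L i) ≤ 1 := fun i => pow_le_one₀ ht0.le ht1
    have htpowpos : ∀ m : ℕ, 0 < t ^ m := fun m => pow_pos ht0 m
    have hdpos : ∀ i, 0 < d i := by
      intro i
      have : ε * t ^ (L i) ≤ (1/2) * 1 :=
        mul_le_mul hεhalf (htpow1 i) (htpowpos _).le (by norm_num)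
      simp only [hddef]
      linarith
    have hdle1 : ∀ i, d i ≤ 1 := by
      intro i
      have : 0 ≤ ε * t ^ (L i) := mul_nonneg hεpos.le (htpowpos _).le
      simp only [hddef]; linarith
    clear_value d ε t μ L S E C
    refine ⟨d, hdpos, ?_⟩
    intro i
    have habs : ∀ j, ‖(A * Matrix.diagonal fun k => ((d k : ℝ) : ℂ)) i j‖
        = ‖A i j‖ * d j := by
      intro j
      rw [Matrix.mul_diagonal, norm_mul, Complex.norm_real, Real.norm_eq_abs, abs_of_pos (hdpos j)]
    have hrs : rowSum (A * Matrix.diagonal fun k => ((d k : ℝ) : ℂ)) i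
        = ∑ j ∈ Finset.univ.erase i, ‖A i j‖ * d j := by
      unfold rowSum rowSumOn
      exact Finset.sum_congr rfl fun j _ => habs j
    rw [hrs, habs]
    by_cases hiT : i ∈ TSet A
    · -- row in T: use chain neighbour
      have hLi1 : 1 ≤ L i := by
        rcases Nat.eq_zero_or_pos (L i) with h0 | h1
        · exfalso
          have := hL i
          rw [h0] at this
          exact this hiT
        · exact h1
      have hsplit : L i = (L i - 1) + 1 := (Nat.succ_pred_eq_of_pos hLi1).symm
      have hchi : chainTo A ((L i - 1) + 1) i := by rw [← hsplit]; exact hL i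
      obtain ⟨j, hAij, hcj⟩ := hchi
      have hji : j ≠ i := by
        intro h
        rw [h] at hcj
        have := hLmin i _ hcj
        omega
      have hLj : L j ≤ L i - 1 := hLmin j _ hcj
      have hjmem : j ∈ Finset.univ.erase i := Finset.mem_erase.2 ⟨hji, Finset.mem_univ j⟩
      -- sum split
      have hsum : ∑ k ∈ Finset.univ.erase i, ‖A i k‖ * d k
          = (∑ k ∈ (Finset.univ.erase i).erase j, ‖A i k‖ * d k)
            + ‖A i j‖ * d j := by
        rw [Finset.sum_erase_add _ _ hjmem]
      have hsum2 : ∑ k ∈ Finset.univ.erase i, ‖A i k‖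
          = (∑ k ∈ (Finset.univ.erase i).erase j, ‖A i k‖)
            + ‖A i j‖ := by
        rw [Finset.sum_erase_add _ _ hjmem]
      have hbound : ∑ k ∈ (Finset.univ.erase i).erase j, ‖A i k‖ * d k
          ≤ ∑ k ∈ (Finset.univ.erase i).erase j, ‖A i k‖ := by
        refine Finset.sum_le_sum fun k _ => ?_
        have := hdle1 k
        nlinarith [norm_nonneg (A i k), hdpos k]
      have hrowle : rowSum A i ≤ ‖A i i‖ := hDD i
      have hrseq : rowSum A i = ∑ k ∈ Finset.univ.erase i, ‖A i k‖ := rfl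
      -- key strict step
      have hμij : μ ≤ ‖A i j‖ := hμle i j hAij
      have htkeyi : t * ‖A i i‖ < ‖A i j‖ :=
        lt_of_lt_of_le (htkey i) hμij
      have hpowmono : t ^ (L i - 1) ≤ t ^ (L j) :=
        pow_le_pow_of_le_one ht0.le ht1 hLj
      have hpowprod : t ^ (L i) = t ^ (L i - 1) * t := by
        rw [← pow_succ, ← hsplit]
      have hP : (0:ℝ) < ε * t ^ (L i - 1) := mul_pos hεpos (htpowpos _)
      have hkey : ‖A i i‖ * (ε * t ^ (L i))
          < ‖A i j‖ * (ε * t ^ (L i - 1)) := by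
        rw [hpowprod]
        nlinarith [mul_lt_mul_of_pos_left htkeyi hP, norm_nonneg (A i i)]
      have hdj : d j ≤ 1 - ε * t ^ (L i - 1) := by
        simp only [hddef]
        have : ε * t ^ (L i - 1) ≤ ε * t ^ (L j) :=
          mul_le_mul_of_nonneg_left hpowmono hεpos.le
        linarith
      have habsijpos : 0 < ‖A i j‖ := norm_pos_iff.2 hAij
      have hdi : d i = 1 - ε * t ^ (L i) := by simp only [hddef]
      rw [hsum, hdi]
      have h1 : ‖A i j‖ * d j
          ≤ ‖A i j‖ * (1 - ε * t ^ (L i - 1)) :=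
        mul_le_mul_of_nonneg_left hdj habsijpos.le
      rw [hrseq, hsum2] at hrowle
      nlinarith [hbound, hkey]
    · -- strictly dominant row
      have hL0 : L i = 0 := Nat.le_zero.1 (hLmin i 0 hiT)
      have hdi : d i = 1 - ε := by simp [hddef, hL0]
      have hb : ∑ j ∈ Finset.univ.erase i, ‖A i j‖ * d j ≤ rowSum A i := by
        unfold rowSum rowSumOn
        refine Finset.sum_le_sum fun k _ => ?_
        nlinarith [norm_nonneg (A i k), hdpos k, hdle1 k]
      have hrow := hεrow i hiT
      have habsnn := norm_nonneg (A i i)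
      rw [hdi]
      have hfin : rowSum A i < ‖A i i‖ * (1 - ε) := by nlinarith [hεpos]
      exact lt_of_le_of_lt hb hfin


end
end

section
/- Let A = [a_ij] ∈ ℂ^{n×n}, n ≥ 2, be a DD matrix with nonzero diagonal entries, such that T(A) is an interwoven set of indices for A. Then A is nonsingular. -/
open scoped BigOperators

noncomputable section

/-- Farid. A DD matrix `A ∈ ℂⁿˣⁿ`, `n ≥ 2`, with nonzero
diagonal entries such that `T(A)` is an interwoven set of indices for `A`,
is nonsingular. -/
theorem farid_nonsingular (n : ℕ) (hn : 2 ≤ n)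
    (A : Matrix (Fin n) (Fin n) ℂ) (hDD : IsDD A)
    (hdiag : ∀ i, A i i ≠ 0) (hint : Interwoven A (TSet A)) :
    A.det ≠ 0 := by
  classical
  intro hdet
  obtain ⟨x, hx, hAx⟩ := (Matrix.exists_mulVec_eq_zero_iff).2 hdet
  have hnne : Nonempty (Fin n) := ⟨⟨0, by omega⟩⟩
  set absx : Fin n → ℝ := fun i => ‖x i‖ with habsx
  set m : ℝ := Finset.univ.sup' Finset.univ_nonempty absx with hmdef
  have hm_le : ∀ i, absx i ≤ m := fun i => Finset.le_sup' absx (Finset.mem_univ i)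
  have hm_pos : 0 < m := by
    obtain ⟨i, hi⟩ := Function.ne_iff.1 hx
    have : 0 < absx i := by
      simp only [habsx]
      exact norm_pos_iff.2 hi
    exact lt_of_lt_of_le this (hm_le i)
  have hrsum : ∀ i, rowSum A i = ∑ j ∈ Finset.univ.erase i, ‖A i j‖ := by
    intro i; rfl
  -- key lemma
  have key : ∀ i, absx i = m →
      (‖A i i‖ ≤ rowSum A i ∧
        ∀ j, j ≠ i → A i j ≠ 0 → absx j = m) := by
    intro i him
    have h0 : ∑ j, A i j * x j = 0 := by
      have := congrFun hAx i
      simpa [Matrix.mulVec, dotProduct] using this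
    have h1 : A i i * x i = -∑ j ∈ Finset.univ.erase i, A i j * x j := by
      have := Finset.add_sum_erase Finset.univ (fun j => A i j * x j) (Finset.mem_univ i)
      rw [h0] at this
      linear_combination (norm := ring_nf) this
    have h2 : ‖A i i‖ * m ≤
        ∑ j ∈ Finset.univ.erase i, ‖A i j‖ * absx j := by
      calc ‖A i i‖ * m = ‖A i i * x i‖ := by
              rw [norm_mul]; rw [← him]
        _ = ‖∑ j ∈ Finset.univ.erase i, A i j * x j‖ := by
              rw [h1, norm_neg]
        _ ≤ ∑ j ∈ Finset.univ.erase i, ‖A i j * x j‖ :=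
              norm_sum_le _ _
        _ = ∑ j ∈ Finset.univ.erase i, ‖A i j‖ * absx j := by
              simp [norm_mul, habsx]
    have h3 : ∑ j ∈ Finset.univ.erase i, ‖A i j‖ * absx j ≤ rowSum A i * m := by
      rw [hrsum, Finset.sum_mul]
      apply Finset.sum_le_sum
      intro j _
      exact mul_le_mul_of_nonneg_left (hm_le j) (norm_nonneg _)
    have h4 : rowSum A i * m ≤ ‖A i i‖ * m :=
      mul_le_mul_of_nonneg_right (hDD i) hm_pos.le
    have ha : ‖A i i‖ ≤ rowSum A i :=
      le_of_mul_le_mul_right (h2.trans h3) hm_pos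
    have heq : ∑ j ∈ Finset.univ.erase i, ‖A i j‖ * absx j = rowSum A i * m :=
      le_antisymm h3 ((h4.trans h2))
    have hzero : ∀ j ∈ Finset.univ.erase i, ‖A i j‖ * (m - absx j) = 0 := by
      have hsum0 : ∑ j ∈ Finset.univ.erase i, ‖A i j‖ * (m - absx j) = 0 := by
        have : ∑ j ∈ Finset.univ.erase i, ‖A i j‖ * (m - absx j)
            = rowSum A i * m - ∑ j ∈ Finset.univ.erase i, ‖A i j‖ * absx j := by
          rw [hrsum, Finset.sum_mul, ← Finset.sum_sub_distrib]
          apply Finset.sum_congr rfl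
          intro j _; ring
        rw [this, heq, sub_self]
      have hnonneg : ∀ j ∈ Finset.univ.erase i, 0 ≤ ‖A i j‖ * (m - absx j) := by
        intro j _
        exact mul_nonneg (norm_nonneg _) (sub_nonneg.2 (hm_le j))
      exact fun j hj => (Finset.sum_eq_zero_iff_of_nonneg hnonneg).1 hsum0 j hj
    refine ⟨ha, fun j hj hAij => ?_⟩
    have := hzero j (Finset.mem_erase.2 ⟨hj, Finset.mem_univ j⟩)
    rcases mul_eq_zero.1 this with h | h
    · exact absurd (norm_eq_zero.1 h) hAij
    · linarith [sub_eq_zero.1 h]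
  have hMS : ∀ i, absx i = m → i ∈ TSet A := by
    intro i hi
    simp only [TSet, Finset.mem_filter, Finset.mem_univ, true_and]
    exact (key i hi).1
  -- there is a small set W containing all maximizers
  have hW : ∃ W : Finset (Fin n), W.card ≤ 1 ∧ ∀ i, absx i = m → i ∈ W := by
    rcases hint.2 with hcard | ⟨hcard, p, q, hpinj, hpS, hpq⟩
    · exact ⟨TSet A, hcard, hMS⟩
    · have hp : ∀ N : ℕ, ∀ k : Fin ((TSet A).card - 1), k.val < N → absx (p k) ≠ m := by
        intro N
        induction N with
        | zero => intro k hk; omega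
        | succ N ih =>
          intro k hk hm
          obtain ⟨hq_ne, hq⟩ := hpq k
          have hqpk : q k ≠ p k := by
            rcases hq with h | ⟨j, hj, hje⟩
            · intro h'; exact h (h' ▸ hpS k)
            · intro h'
              have : j = k := hpinj (hje ▸ h')
              omega
          have hqM : absx (q k) = m := (key (p k) hm).2 (q k) hqpk hq_ne
          have hqS : q k ∈ TSet A := hMS _ hqM
          rcases hq with h | ⟨j, hj, hje⟩
          · exact h hqS
          · exact ih j (by omega) (hje ▸ hqM)
      set P : Finset (Fin n) := Finset.image p Finset.univ with hPdef
      have hPsub : P ⊆ TSet A := by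
        intro a ha
        obtain ⟨k, _, hk⟩ := Finset.mem_image.1 ha
        exact hk ▸ hpS k
      have hPcard : P.card = (TSet A).card - 1 := by
        rw [hPdef, Finset.card_image_of_injective _ hpinj, Finset.card_univ, Fintype.card_fin]
      refine ⟨TSet A \ P, ?_, ?_⟩
      · rw [Finset.card_sdiff_of_subset hPsub, hPcard]
        omega
      · intro i hi
        refine Finset.mem_sdiff.2 ⟨hMS i hi, ?_⟩
        intro hiP
        obtain ⟨k, _, hk⟩ := Finset.mem_image.1 hiP
        exact hp ((TSet A).card) k (by omega) (hk ▸ hi)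
  obtain ⟨W, hWcard, hWmem⟩ := hW
  obtain ⟨i₀, _, hi₀⟩ := Finset.exists_mem_eq_sup' (Finset.univ_nonempty (α := Fin n)) absx
  have hi₀m : absx i₀ = m := hi₀.symm
  have hi₀W : i₀ ∈ W := hWmem i₀ hi₀m
  have hi₀T : ‖A i₀ i₀‖ ≤ rowSum A i₀ := (key i₀ hi₀m).1
  have hrpos : 0 < rowSum A i₀ :=
    lt_of_lt_of_le (norm_pos_iff.2 (hdiag i₀)) hi₀T
  have : ∃ j ∈ Finset.univ.erase i₀, ‖A i₀ j‖ ≠ 0 := by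
    by_contra h
    push_neg at h
    have : rowSum A i₀ = 0 := by
      rw [hrsum]
      exact Finset.sum_eq_zero h
    linarith
  obtain ⟨j, hjmem, hjne⟩ := this
  have hji₀ : j ≠ i₀ := (Finset.mem_erase.1 hjmem).1
  have hAj : A i₀ j ≠ 0 := fun h => hjne (by rw [h]; simp)
  have hjm : absx j = m := (key i₀ hi₀m).2 j hji₀ hAj
  have hjW : j ∈ W := hWmem j hjm
  exact hji₀ (Finset.card_le_one.1 hWcard j hjW i₀ hi₀W)

end
end

section
/- Let A = [a_ij] ∈ ℂ^{n×n}, n ≥ 2, be a DD matrix with nonzero diagonal entries, such that T(A) is an interwoven set of indices for A. Then A is an H-matrix. -/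
open scoped BigOperators

noncomputable section

/-- Auxiliary reachability predicate: `ReachOut A k i` means from row `i` one can
reach a row outside `TSet A` through at most `k` nonzero entries. -/
def ReachOut {n : ℕ} (A : Matrix (Fin n) (Fin n) ℂ) : ℕ → Fin n → Prop
  | 0, i => i ∉ TSet A
  | k+1, i => ReachOut A k i ∨ ∃ j, A i j ≠ 0 ∧ ReachOut A k j

lemma reachOut_zero {n : ℕ} (A : Matrix (Fin n) (Fin n) ℂ) (i : Fin n) :
    ReachOut A 0 i ↔ i ∉ TSet A := Iff.rfl

lemma reachOut_succ {n : ℕ} (A : Matrix (Fin n) (Fin n) ℂ) (k : ℕ) (i : Fin n) :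
    ReachOut A (k+1) i ↔ ReachOut A k i ∨ ∃ j, A i j ≠ 0 ∧ ReachOut A k j := Iff.rfl

/-- A DD matrix `A ∈ ℂⁿˣⁿ`, `n ≥ 2`, with nonzero diagonal
entries such that `T(A)` is an interwoven set of indices for `A`,
is an H-matrix. -/
theorem farid_hmatrix (n : ℕ) (hn : 2 ≤ n)
    (A : Matrix (Fin n) (Fin n) ℂ) (hDD : IsDD A)
    (hdiag : ∀ i, A i i ≠ 0) (hint : Interwoven A (TSet A)) :
    IsHMatrix A := by
  classical
  have hmemT : ∀ i, i ∈ TSet A ↔ ‖A i i‖ ≤ rowSum A i := by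
    intro i; simp [TSet]
  have hr_nonneg : ∀ i, 0 ≤ rowSum A i := by
    intro i
    simp only [rowSum, rowSumOn]
    exact Finset.sum_nonneg fun j _ => norm_nonneg _
  have hdpos : ∀ i, 0 < ‖A i i‖ := fun i => norm_pos_iff.mpr (hdiag i)
  have hnotT : ∀ i, i ∉ TSet A → rowSum A i < ‖A i i‖ := by
    intro i hi
    by_contra h
    exact hi ((hmemT i).mpr (not_lt.mp h))
  have hnz : ∀ i, i ∈ TSet A → ∃ j, j ≠ i ∧ A i j ≠ 0 := by
    intro i hi
    by_contra h; push_neg at h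
    have h0 : rowSum A i = 0 := by
      simp only [rowSum, rowSumOn]
      refine Finset.sum_eq_zero fun j hj => ?_
      rw [h j (Finset.ne_of_mem_erase hj)]; simp
    have h1 := (hmemT i).mp hi
    rw [h0] at h1
    exact absurd h1 (not_le.mpr (hdpos i))
  obtain ⟨hproper, hcase⟩ := hint
  -- Every index reaches out of `TSet A`.
  have hall : ∀ i, ∃ k, ReachOut A k i := by
    rcases hcase with hsmall | ⟨hcard, p, q, hpinj, hpmem, hpq⟩
    · intro i
      by_cases hiT : i ∈ TSet A
      · obtain ⟨j, hji, hj⟩ := hnz i hiT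
        refine ⟨1, Or.inr ⟨j, hj, ?_⟩⟩
        intro hjT
        exact hji (Finset.card_le_one.mp hsmall j hjT i hiT)
      · exact ⟨0, hiT⟩
    · have hp_reach : ∀ m : ℕ, ∀ i : Fin ((TSet A).card - 1), (i : ℕ) = m →
          ∃ k, ReachOut A k (p i) := by
        intro m
        induction m using Nat.strong_induction_on with
        | _ m ih =>
          intro i him
          obtain ⟨hAij, hq⟩ := hpq i
          rcases hq with hqT | ⟨j, hji, hqj⟩
          · exact ⟨1, Or.inr ⟨q i, hAij, hqT⟩⟩
          · obtain ⟨k, hk⟩ := ih (j : ℕ) (by rw [← him]; exact hji) j rfl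
            refine ⟨k + 1, Or.inr ⟨q i, hAij, ?_⟩⟩
            rw [hqj]; exact hk
      intro i
      by_cases hiT : i ∈ TSet A
      · by_cases hip : ∃ m, p m = i
        · obtain ⟨m, hm⟩ := hip
          obtain ⟨k, hk⟩ := hp_reach (m : ℕ) m rfl
          exact ⟨k, hm ▸ hk⟩
        · push_neg at hip
          obtain ⟨j, hji, hj⟩ := hnz i hiT
          by_cases hjT : j ∈ TSet A
          · have hjp : ∃ m, p m = j := by
              by_contra hc; push_neg at hc
              set P := Finset.image p Finset.univ with hP
              have hPsub : P ⊆ TSet A := by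
                intro x hx
                obtain ⟨m, -, hm⟩ := Finset.mem_image.mp hx
                rw [← hm]; exact hpmem m
              have hPcard : P.card = (TSet A).card - 1 := by
                rw [hP, Finset.card_image_of_injective _ hpinj, Finset.card_univ,
                  Fintype.card_fin]
              have hiP : i ∉ P := by
                simp only [hP, Finset.mem_image]
                rintro ⟨m, -, hm⟩; exact (hip m) hm
              have hjP : j ∉ P := by
                simp only [hP, Finset.mem_image]
                rintro ⟨m, -, hm⟩; exact (hc m) hm
              have h1 : i ∉ insert j P := by
                simp only [Finset.mem_insert, not_or]
                exact ⟨Ne.symm hji, hiP⟩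
              have hsub : insert i (insert j P) ⊆ TSet A := by
                intro x hx
                rcases Finset.mem_insert.mp hx with rfl | hx
                · exact hiT
                rcases Finset.mem_insert.mp hx with rfl | hx
                · exact hjT
                · exact hPsub hx
              have hc1 : (insert i (insert j P)).card = P.card + 2 := by
                rw [Finset.card_insert_of_notMem h1, Finset.card_insert_of_notMem hjP]
              have hle := Finset.card_le_card hsub
              omega
            obtain ⟨m, hm⟩ := hjp
            obtain ⟨k, hk⟩ := hp_reach (m : ℕ) m rfl
            exact ⟨k + 1, Or.inr ⟨j, hj, hm ▸ hk⟩⟩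
          · exact ⟨1, Or.inr ⟨j, hj, hjT⟩⟩
      · exact ⟨0, hiT⟩
  -- The level function.
  obtain ⟨ℓ, hl0, hstep⟩ : ∃ ℓ : Fin n → ℕ, (∀ i, i ∉ TSet A → ℓ i = 0) ∧
      (∀ i, i ∈ TSet A → ∃ j, j ≠ i ∧ A i j ≠ 0 ∧ ℓ j < ℓ i) := by
    refine ⟨fun i => Nat.find (hall i), ?_, ?_⟩
    · intro i hi
      exact (Nat.find_eq_zero (hall i)).mpr hi
    · intro i hi
      have hspec : ReachOut A (Nat.find (hall i)) i := Nat.find_spec (hall i)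
      have hne0 : Nat.find (hall i) ≠ 0 := by
        intro h0
        rw [h0] at hspec
        exact ((reachOut_zero A i).mp hspec) hi
      obtain ⟨k, hk⟩ : ∃ k, Nat.find (hall i) = k + 1 :=
        ⟨Nat.find (hall i) - 1, by omega⟩
      rw [hk] at hspec
      have hmin : ¬ ReachOut A k i := Nat.find_min (hall i) (by omega)
      rcases (reachOut_succ A k i).mp hspec with h | ⟨j, hj, hreach⟩
      · exact absurd h hmin
      · refine ⟨j, ?_, hj, ?_⟩
        · rintro rfl; exact hmin hreach
        · show Nat.find (hall j) < Nat.find (hall i)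
          have h5 : Nat.find (hall j) ≤ k := Nat.find_min' (hall j) hreach
          omega
  clear hall
  -- The constant K.
  obtain ⟨K, hK1, hKm⟩ : ∃ K : ℝ, 1 ≤ K ∧
      ∀ i j, A i j ≠ 0 → rowSum A i < K * ‖A i j‖ := by
    set R := ∑ i, rowSum A i with hR
    have hRle : ∀ i, rowSum A i ≤ R :=
      fun i => Finset.single_le_sum (fun j _ => hr_nonneg j) (Finset.mem_univ i)
    have hR0 : (0:ℝ) ≤ R := le_trans (hr_nonneg ⟨0, by omega⟩) (hRle ⟨0, by omega⟩)
    set s : Finset (Fin n × Fin n) := Finset.univ.filter (fun pr => A pr.1 pr.2 ≠ 0)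
      with hs
    have hsne : s.Nonempty := ⟨(⟨0, by omega⟩, ⟨0, by omega⟩), by simp [hs, hdiag]⟩
    set m₀ := s.inf' hsne (fun pr => ‖A pr.1 pr.2‖) with hm₀
    have hm₀pos : 0 < m₀ := by
      rw [hm₀, Finset.lt_inf'_iff]
      intro pr hpr
      refine norm_pos_iff.mpr ?_
      rw [hs] at hpr
      exact (Finset.mem_filter.mp hpr).2
    have hm₀le : ∀ i j, A i j ≠ 0 → m₀ ≤ ‖A i j‖ := by
      intro i j h
      rw [hm₀]
      refine Finset.inf'_le (b := (i, j)) _ ?_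
      rw [hs, Finset.mem_filter]
      exact ⟨Finset.mem_univ _, h⟩
    refine ⟨R / m₀ + 1, ?_, ?_⟩
    · have : 0 ≤ R / m₀ := div_nonneg hR0 hm₀pos.le
      linarith
    · intro i j h
      have h1 : m₀ ≤ ‖A i j‖ := hm₀le i j h
      have h2 : 0 ≤ R / m₀ := div_nonneg hR0 hm₀pos.le
      have h3 : R / m₀ * m₀ = R := div_mul_cancel₀ R hm₀pos.ne'
      have h4 : R / m₀ * m₀ ≤ R / m₀ * ‖A i j‖ :=
        mul_le_mul_of_nonneg_left h1 h2
      rw [h3] at h4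
      have h5 : 0 < ‖A i j‖ := lt_of_lt_of_le hm₀pos h1
      rw [add_mul, one_mul]
      linarith [hRle i]
  -- The constant epsilon.
  obtain ⟨ε, hεpos, hεhalf, hεlt⟩ : ∃ ε : ℝ, 0 < ε ∧ ε ≤ 1/2 ∧
      ∀ i, i ∉ TSet A → rowSum A i < (1 - ε) * ‖A i i‖ := by
    have hCne : (Finset.univ \ TSet A).Nonempty := by
      obtain ⟨x, -, hx⟩ := Finset.exists_of_ssubset hproper
      exact ⟨x, by simp [hx]⟩
    set t : Fin n → ℝ := fun i => (‖A i i‖ - rowSum A i) / ‖A i i‖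
      with ht
    have htpos : ∀ i, i ∉ TSet A → 0 < t i := by
      intro i hi
      simp only [ht]
      exact div_pos (by linarith [hnotT i hi]) (hdpos i)
    have hinfpos : 0 < (Finset.univ \ TSet A).inf' hCne t := by
      rw [Finset.lt_inf'_iff]
      intro i hi
      exact htpos i (Finset.mem_sdiff.mp hi).2
    refine ⟨(1/2) * (Finset.univ \ TSet A).inf' hCne t, by linarith, ?_, ?_⟩
    · have hC2 := hCne
      obtain ⟨i, hi⟩ := hC2
      have hi' : i ∉ TSet A := (Finset.mem_sdiff.mp hi).2
      have h1 : (Finset.univ \ TSet A).inf' hCne t ≤ t i := Finset.inf'_le _ hi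
      have h2 : t i ≤ 1 := by
        simp only [ht]
        exact div_le_one_of_le₀ (by linarith [hr_nonneg i]) (hdpos i).le
      linarith
    · intro i hi
      have h1 : (Finset.univ \ TSet A).inf' hCne t ≤ t i :=
        Finset.inf'_le _ (by simp [hi])
      have h3 : (1/2) * (Finset.univ \ TSet A).inf' hCne t < t i := by linarith
      simp only [ht] at h3
      rw [lt_div_iff₀ (hdpos i)] at h3
      nlinarith
  -- the scaling
  set e : Fin n → ℝ := fun i => ε / K ^ (ℓ i) with he
  set d : Fin n → ℝ := fun i => 1 - e i with hd
  have hKpos : (0:ℝ) < K := by linarith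
  have hKpow_pos : ∀ k : ℕ, (0:ℝ) < K ^ k := fun k => pow_pos hKpos k
  have hepos : ∀ i, 0 < e i := by
    intro i
    simp only [he]
    exact div_pos hεpos (hKpow_pos _)
  have heε : ∀ i, e i ≤ ε := by
    intro i
    have h1 : (1:ℝ) ≤ K ^ (ℓ i) := one_le_pow₀ hK1
    calc e i = ε / K ^ (ℓ i) := by simp only [he]
      _ ≤ ε / 1 := by gcongr
      _ = ε := div_one ε
  have hdpos' : ∀ i, 0 < d i := by
    intro i
    have h1 := heε i
    simp only [hd]
    linarith
  have hdle1 : ∀ i, d i ≤ 1 := by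
    intro i
    have := hepos i
    simp only [hd]
    linarith
  refine ⟨d, hdpos', ?_⟩
  intro i
  have hBij : ∀ j, ‖(A * Matrix.diagonal fun k => ((d k : ℝ) : ℂ)) i j‖
      = ‖A i j‖ * d j := by
    intro j
    rw [Matrix.mul_diagonal, norm_mul, Complex.norm_real, Real.norm_of_nonneg (hdpos' j).le]
  have hrowB : rowSum (A * Matrix.diagonal fun k => ((d k : ℝ) : ℂ)) i
      = ∑ j ∈ Finset.univ.erase i, ‖A i j‖ * d j := by
    simp only [rowSum, rowSumOn]
    exact Finset.sum_congr rfl fun j _ => hBij j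
  rw [hrowB, hBij i]
  by_cases hiT : i ∈ TSet A
  · -- degenerate row: use the chain
    have hreq : rowSum A i = ‖A i i‖ :=
      le_antisymm (hDD i) ((hmemT i).mp hiT)
    obtain ⟨j, hjne, hjnz, hjlt⟩ := hstep i hiT
    have hsplit : ∑ j' ∈ Finset.univ.erase i, ‖A i j'‖ * d j'
        = rowSum A i - ∑ j' ∈ Finset.univ.erase i, ‖A i j'‖ * e j' := by
      simp only [rowSum, rowSumOn]
      rw [← Finset.sum_sub_distrib]
      refine Finset.sum_congr rfl fun j' _ => ?_
      simp only [hd]; ring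
    have hterm : ‖A i j‖ * e j
        ≤ ∑ j' ∈ Finset.univ.erase i, ‖A i j'‖ * e j' := by
      refine Finset.single_le_sum (f := fun j' => ‖A i j'‖ * e j')
        (fun j' _ => ?_) (Finset.mem_erase.mpr ⟨hjne, Finset.mem_univ j⟩)
      exact mul_nonneg (norm_nonneg _) (hepos j').le
    obtain ⟨L, hL⟩ : ∃ L, ℓ i = L + 1 := ⟨ℓ i - 1, by omega⟩
    have hej : ε / K ^ L ≤ e j := by
      simp only [he]
      have h1 : K ^ (ℓ j) ≤ K ^ L := pow_le_pow_right₀ hK1 (by omega)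
      gcongr
    have hKL0 : (K:ℝ) ^ L ≠ 0 := (hKpow_pos L).ne'
    have hK0 : (K:ℝ) ≠ 0 := hKpos.ne'
    have hkey : e i * rowSum A i < ‖A i j‖ * e j := by
      have h1 : rowSum A i < K * ‖A i j‖ := hKm i j hjnz
      have h2 : e i = ε / (K ^ L * K) := by
        simp only [he]
        rw [hL, pow_succ]
      have hKLpos : (0:ℝ) < K ^ L * K := by positivity
      calc e i * rowSum A i = ε * rowSum A i / (K ^ L * K) := by rw [h2]; ring
        _ < ε * (K * ‖A i j‖) / (K ^ L * K) := by
            have hnum : ε * rowSum A i < ε * (K * ‖A i j‖) :=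
              mul_lt_mul_of_pos_left h1 hεpos
            gcongr
        _ = (ε / K ^ L) * ‖A i j‖ := by
            field_simp
        _ ≤ e j * ‖A i j‖ :=
            mul_le_mul_of_nonneg_right hej (norm_nonneg _)
        _ = ‖A i j‖ * e j := mul_comm _ _
    rw [hsplit]
    have hrhs : ‖A i i‖ * d i = rowSum A i - e i * rowSum A i := by
      rw [← hreq]
      simp only [hd]
      ring
    rw [hrhs]
    linarith [hterm, hkey]
  · -- strictly dominant row
    have hℓ0 : ℓ i = 0 := hl0 i hiT
    have hsum : ∑ j ∈ Finset.univ.erase i, ‖A i j‖ * d j ≤ rowSum A i := by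
      simp only [rowSum, rowSumOn]
      refine Finset.sum_le_sum fun j _ => ?_
      calc ‖A i j‖ * d j ≤ ‖A i j‖ * 1 :=
            mul_le_mul_of_nonneg_left (hdle1 j) (norm_nonneg _)
        _ = ‖A i j‖ := mul_one _
    have h2 : rowSum A i < (1 - ε) * ‖A i i‖ := hεlt i hiT
    have hdi : d i = 1 - ε := by
      simp only [hd, he, hℓ0, pow_zero, div_one]
    rw [hdi]
    calc ∑ j ∈ Finset.univ.erase i, ‖A i j‖ * d j
        ≤ rowSum A i := hsum
      _ < (1 - ε) * ‖A i i‖ := h2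
      _ = ‖A i i‖ * (1 - ε) := mul_comm _ _

end
end

section
/- Let A = [a_ij] ∈ ℂ^{n×n}, n ≥ 2, be a DD matrix. Then the following two conditions are equivalent: (1) T(A) = ∅, or for each i₀ ∈ T(A) there exists a nonzero elements chain a_{i₀i₁}, a_{i₁i₂}, …, a_{i_{r-1}i_r} with i_r ∈ N \ T(A); (2) A has nonzero diagonal entries and T(A) is an interwoven set of indices for A. -/
open scoped BigOperators

noncomputable section

-- ### Auxiliary lemmas

section Aux

variable {ι : Type*} [Fintype ι] [DecidableEq ι]

lemma mem_TSet_iff (A : Matrix ι ι ℂ) (i : ι) :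
    i ∈ TSet A ↔ ‖A i i‖ ≤ rowSum A i := by
  simp [TSet]

lemma rowSum_nonneg (A : Matrix ι ι ℂ) (i : ι) : 0 ≤ rowSum A i :=
  Finset.sum_nonneg fun j _ => norm_nonneg _

lemma exists_offdiag_ne_zero (A : Matrix ι ι ℂ) (i : ι) (h : 0 < rowSum A i) :
    ∃ j, j ≠ i ∧ A i j ≠ 0 := by
  obtain ⟨j, hj, hne⟩ := Finset.exists_ne_zero_of_sum_ne_zero (h := ne_of_gt h)
  exact ⟨j, Finset.ne_of_mem_erase hj, fun h0 => hne (by simp [h0])⟩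

lemma chain_base (A : Matrix ι ι ℂ) {i j : ι} (hij : A i j ≠ 0) (hj : j ∉ TSet A) :
    HasChainOut A i := by
  refine ⟨1, fun m => if m = 0 then i else j, one_pos, by simp, ?_, ?_⟩
  · intro k
    have hk : k = 0 := Subsingleton.elim _ _
    subst hk
    simpa using hij
  · have h10 : (Fin.last 1 : Fin 2) ≠ 0 := by decide
    simpa [h10] using hj

lemma chain_step (A : Matrix ι ι ℂ) {i j : ι} (hij : A i j ≠ 0) (hj : HasChainOut A j) :
    HasChainOut A i := by
  obtain ⟨r, c, hr, hc0, hedge, hlast⟩ := hj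
  refine ⟨r + 1, Fin.cons i c, Nat.succ_pos _, rfl, ?_, ?_⟩
  · intro k
    refine Fin.cases ?_ ?_ k
    · simpa [hc0] using hij
    · intro m
      have h1 : ((m.succ : Fin (r+1)).castSucc : Fin (r+2)) = (m.castSucc).succ :=
        (Fin.succ_castSucc m).symm
      rw [h1, Fin.cons_succ, Fin.cons_succ]
      exact hedge m
  · have h2 : (Fin.last (r+1)) = (Fin.last r).succ := (Fin.succ_last r).symm
    rw [h2, Fin.cons_succ]
    exact hlast

/-- `chainProp A i r` : there is a nonzero elements chain of length `r` from `i`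
out of `T(A)`. -/
def chainProp (A : Matrix ι ι ℂ) (i : ι) (r : ℕ) : Prop :=
  0 < r ∧ ∃ c : Fin (r + 1) → ι, c 0 = i ∧
    (∀ k : Fin r, A (c k.castSucc) (c k.succ) ≠ 0) ∧ c (Fin.last r) ∉ TSet A

lemma hasChainOut_iff_exists (A : Matrix ι ι ℂ) (i : ι) :
    HasChainOut A i ↔ ∃ r, chainProp A i r := by
  constructor
  · rintro ⟨r, c, h1, h2, h3, h4⟩; exact ⟨r, h1, c, h2, h3, h4⟩
  · rintro ⟨r, h1, c, h2, h3, h4⟩; exact ⟨r, c, h1, h2, h3, h4⟩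

open scoped Classical in
/-- Length of a shortest chain out of `T(A)` starting at `i`. -/
def chainLen (A : Matrix ι ι ℂ) (i : ι) : ℕ :=
  if h : ∃ r, chainProp A i r then Nat.find h else 0

/-- From a minimal chain out of `x`, the second vertex `j` satisfies:
either `j ∉ T(A)`, or `j` has a strictly shorter chain out. -/
lemma chain_decrement (A : Matrix ι ι ℂ) {x : ι} (hx : HasChainOut A x) :
    ∃ j, A x j ≠ 0 ∧ (j ∉ TSet A ∨ (HasChainOut A j ∧ chainLen A j < chainLen A x)) := by
  classical
  have h : ∃ r, chainProp A x r := (hasChainOut_iff_exists A x).mp hx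
  have hdx : chainLen A x = Nat.find h := by
    simp [chainLen, dif_pos h]
  have hspec : chainProp A x (Nat.find h) := Nat.find_spec h
  set r := Nat.find h with hrdef
  clear_value r
  obtain ⟨hr, c, hc0, hedge, hlast⟩ := hspec
  obtain ⟨r', rfl⟩ : ∃ r', r = r' + 1 := ⟨r - 1, by omega⟩
  have e0 : A x (c 1) ≠ 0 := by
    have h3 := hedge ⟨0, hr⟩
    have h1 : ((⟨0, hr⟩ : Fin (r'+1)).castSucc : Fin (r'+2)) = 0 := rfl
    have h2 : ((⟨0, hr⟩ : Fin (r'+1)).succ : Fin (r'+2)) = 1 := rfl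
    rwa [h1, h2, hc0] at h3
  refine ⟨c 1, e0, ?_⟩
  by_cases hj : c 1 ∈ TSet A
  · right
    have hr1 : 0 < r' := by
      rcases Nat.eq_zero_or_pos r' with h0 | h0
      · subst h0
        exact absurd hj (by simpa [Fin.last] using hlast)
      · exact h0
    have hcp : chainProp A (c 1) r' := by
      refine ⟨hr1, fun m => c m.succ, rfl, ?_, ?_⟩
      · intro k
        have h1 : ((k.castSucc : Fin (r'+1)).succ : Fin (r'+2)) = (k.succ).castSucc :=
          Fin.succ_castSucc k
        have h2 := hedge k.succ
        show A (c ((k.castSucc).succ)) (c (k.succ).succ) ≠ 0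
        rwa [← h1] at h2
      · have h4 : ((Fin.last r').succ : Fin (r'+2)) = Fin.last (r'+1) := Fin.succ_last r'
        show c ((Fin.last r').succ) ∉ TSet A
        rw [h4]; exact hlast
    refine ⟨(hasChainOut_iff_exists A _).mpr ⟨r', hcp⟩, ?_⟩
    have hle : chainLen A (c 1) ≤ r' := by
      have hex : ∃ r, chainProp A (c 1) r := ⟨r', hcp⟩
      simp only [chainLen, dif_pos hex]
      exact Nat.find_min' hex hcp
    omega
  · exact Or.inl hj

end Aux

/-- For a DD matrix `A ∈ ℂⁿˣⁿ`, `n ≥ 2`, the Shivakumar–Chew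
chain condition and the Farid interwoven condition are equivalent. -/
theorem chain_iff_interwoven (n : ℕ) (hn : 2 ≤ n)
    (A : Matrix (Fin n) (Fin n) ℂ) (hDD : IsDD A) :
    (TSet A = ∅ ∨ ∀ i₀ ∈ TSet A, HasChainOut A i₀) ↔
      ((∀ i, A i i ≠ 0) ∧ Interwoven A (TSet A)) := by
  classical
  constructor
  · intro h1
    have hdiag : ∀ i, A i i ≠ 0 := by
      intro i hii
      have hrs0 : rowSum A i = 0 :=
        le_antisymm (by simpa [hii] using hDD i) (rowSum_nonneg A i)
      have hiT : i ∈ TSet A := (mem_TSet_iff A i).mpr (by simp [hii, hrs0])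
      have hch : HasChainOut A i := by
        rcases h1 with h | h
        · rw [h] at hiT; simp at hiT
        · exact h i hiT
      obtain ⟨r, c, hr, hc0, hedge, _⟩ := hch
      have hz : ∀ j, A i j = 0 := by
        intro j
        by_cases hji : j = i
        · rw [hji]; exact hii
        · have hmem : j ∈ Finset.univ.erase i :=
            Finset.mem_erase.mpr ⟨hji, Finset.mem_univ _⟩
          have h0 : rowSum A i = ∑ j ∈ Finset.univ.erase i, ‖A i j‖ := rfl
          have h2 := (Finset.sum_eq_zero_iff_of_nonneg
            (fun k _ => norm_nonneg _)).mp (h0 ▸ hrs0) j hmem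
          simpa using h2
      have e0 := hedge ⟨0, hr⟩
      have hcast : ((⟨0, hr⟩ : Fin r).castSucc : Fin (r+1)) = 0 := rfl
      rw [hcast, hc0] at e0
      exact e0 (hz _)
    have hproper : TSet A ⊂ Finset.univ := by
      rw [Finset.ssubset_univ_iff]
      intro he
      have h0 : (⟨0, by omega⟩ : Fin n) ∈ TSet A := by
        rw [he]; exact Finset.mem_univ _
      rcases h1 with h | h
      · rw [h] at h0; simp at h0
      · obtain ⟨r, c, _, _, _, hlast⟩ := h _ h0
        exact hlast (by rw [he]; exact Finset.mem_univ _)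
    refine ⟨hdiag, hproper, ?_⟩
    by_cases hcard : (TSet A).card ≤ 1
    · exact Or.inl hcard
    · push_neg at hcard
      refine Or.inr ⟨hcard, ?_⟩
      have hch : ∀ i ∈ TSet A, HasChainOut A i := by
        rcases h1 with h | h
        · rw [h] at hcard; simp at hcard
        · exact h
      have claim : ∀ k, k ≤ (TSet A).card → ∃ p : Fin k → Fin n,
          Function.Injective p ∧ (∀ i, p i ∈ TSet A) ∧
          ∀ i, ∃ qv, A (p i) qv ≠ 0 ∧ (qv ∉ TSet A ∨ ∃ j, j < i ∧ qv = p j) := by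
        intro k
        induction k with
        | zero =>
          intro _
          exact ⟨Fin.elim0, fun a => a.elim0, fun a => a.elim0, fun a => a.elim0⟩
        | succ k ih =>
          intro hk
          obtain ⟨p, hinj, hmem, hq⟩ := ih (by omega)
          set R := Finset.univ.image p with hR
          have hRsub : R ⊆ TSet A := by
            intro y hy
            obtain ⟨m, _, rfl⟩ := Finset.mem_image.mp hy
            exact hmem m
          have hRcard : R.card = k := by
            rw [hR, Finset.card_image_of_injective _ hinj, Finset.card_univ,
              Fintype.card_fin]
          have hne : (TSet A \ R).Nonempty := by
            rw [← Finset.card_pos, Finset.card_sdiff_of_subset hRsub]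
            omega
          obtain ⟨x, hxmem, hxmin⟩ := Finset.exists_min_image _ (chainLen A) hne
          have hxS : x ∈ TSet A := (Finset.mem_sdiff.mp hxmem).1
          have hxR : x ∉ R := (Finset.mem_sdiff.mp hxmem).2
          obtain ⟨j, hxj, hjc⟩ := chain_decrement A (hch x hxS)
          refine ⟨Fin.snoc p x, ?_, ?_, ?_⟩
          · intro a b hab
            rcases Fin.eq_castSucc_or_eq_last a with ⟨a', rfl⟩ | rfl <;>
              rcases Fin.eq_castSucc_or_eq_last b with ⟨b', rfl⟩ | rfl
            · rw [Fin.snoc_castSucc, Fin.snoc_castSucc] at hab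
              exact congrArg Fin.castSucc (hinj hab)
            · rw [Fin.snoc_castSucc, Fin.snoc_last] at hab
              exact absurd (Finset.mem_image.mpr ⟨a', Finset.mem_univ _, hab⟩) hxR
            · rw [Fin.snoc_last, Fin.snoc_castSucc] at hab
              exact absurd (Finset.mem_image.mpr ⟨b', Finset.mem_univ _, hab.symm⟩) hxR
            · rfl
          · intro i
            refine Fin.lastCases ?_ ?_ i
            · simpa using hxS
            · intro m; simpa using hmem m
          · intro i
            refine Fin.lastCases ?_ ?_ i
            · refine ⟨j, by simpa using hxj, ?_⟩
              rcases hjc with hjn | ⟨hjch, hjlt⟩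
              · exact Or.inl hjn
              · by_cases hjS : j ∈ TSet A
                · right
                  have hjR : j ∈ R := by
                    by_contra hjR
                    have hmem' : j ∈ TSet A \ R := Finset.mem_sdiff.mpr ⟨hjS, hjR⟩
                    have := hxmin j hmem'
                    omega
                  obtain ⟨m, _, rfl⟩ := Finset.mem_image.mp hjR
                  exact ⟨m.castSucc, Fin.castSucc_lt_last m,
                    by rw [Fin.snoc_castSucc]⟩
                · exact Or.inl hjS
            · intro m
              obtain ⟨qv, hqv1, hqv2⟩ := hq m
              refine ⟨qv, by simpa using hqv1, ?_⟩
              rcases hqv2 with h | ⟨j0, hj0, rfl⟩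
              · exact Or.inl h
              · exact Or.inr ⟨j0.castSucc,
                  by simpa [Fin.castSucc_lt_castSucc_iff] using hj0,
                  by rw [Fin.snoc_castSucc]⟩
      obtain ⟨p, hinj, hmem, hq⟩ := claim ((TSet A).card - 1) (by omega)
      choose q hq1 hq2 using hq
      exact ⟨p, q, hinj, hmem, fun i => ⟨hq1 i, hq2 i⟩⟩
  · rintro ⟨hdiag, hproper, hcases⟩
    right
    intro m hm
    have hpos : 0 < rowSum A m :=
      lt_of_lt_of_le (norm_pos_iff.mpr (hdiag m)) ((mem_TSet_iff A m).mp hm)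
    obtain ⟨j, hjm, hmj⟩ := exists_offdiag_ne_zero A m hpos
    rcases hcases with hc1 | ⟨hcard, p, q, hinj, hmem, hpq⟩
    · have hjT : j ∉ TSet A := by
        intro hjT
        exact hjm (Finset.card_le_one.mp hc1 j hjT m hm)
      exact chain_base A hmj hjT
    · have key : ∀ v : ℕ, ∀ i : Fin ((TSet A).card - 1), i.val ≤ v →
          HasChainOut A (p i) := by
        intro v
        induction v with
        | zero =>
          intro i hi
          obtain ⟨h1, h2⟩ := hpq i
          rcases h2 with h | ⟨j0, hj0, hqe⟩
          · exact chain_base A h1 h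
          · exact absurd (Fin.lt_def.mp hj0) (by omega)
        | succ v ih =>
          intro i hi
          obtain ⟨h1, h2⟩ := hpq i
          rcases h2 with h | ⟨j0, hj0, hqe⟩
          · exact chain_base A h1 h
          · have hj0v : j0.val ≤ v := by
              have := Fin.lt_def.mp hj0; omega
            exact chain_step A h1 (hqe ▸ ih j0 hj0v)
      have key' : ∀ i, HasChainOut A (p i) := fun i => key i.val i le_rfl
      by_cases hmp : ∃ k, p k = m
      · obtain ⟨k, rfl⟩ := hmp
        exact key' k
      · push_neg at hmp
        by_cases hjT : j ∈ TSet A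
        · have hmimg : m ∉ Finset.univ.image p := by
            intro hmem'
            obtain ⟨k, _, hk⟩ := Finset.mem_image.mp hmem'
            exact hmp k hk
          have himg : insert m (Finset.univ.image p) = TSet A := by
            apply Finset.eq_of_subset_of_card_le
            · intro y hy
              rcases Finset.mem_insert.mp hy with rfl | hy'
              · exact hm
              · obtain ⟨k, _, rfl⟩ := Finset.mem_image.mp hy'
                exact hmem k
            · rw [Finset.card_insert_of_notMem hmimg,
                Finset.card_image_of_injective _ hinj, Finset.card_univ,
                Fintype.card_fin]
              omega
          have hj' : j ∈ insert m (Finset.univ.image p) := by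
            rw [himg]; exact hjT
          rcases Finset.mem_insert.mp hj' with rfl | hj''
          · exact absurd rfl hjm
          · obtain ⟨k, _, rfl⟩ := Finset.mem_image.mp hj''
            exact chain_step A hmj (key' k)
        · exact chain_base A hmj hjT


end
end

section
/- Let A = [a_ij] ∈ ℂ^{n×n}, n ≥ 2, be a DD matrix such that T(A) = ∅ or the principal submatrix A|_{T(A)²} is an SDD matrix. Then A is an H-matrix. -/
open scoped BigOperators

noncomputable section

lemma split_erase_sum {ι : Type*} [Fintype ι] [DecidableEq ι]
    (T : Finset ι) (i : ι) (f : ι → ℝ) :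
    ∑ j ∈ Finset.univ.erase i, f j
      = ∑ j ∈ T.erase i, f j + ∑ j ∈ (Finset.univ \ T).erase i, f j := by
  have hsub : T.erase i ⊆ Finset.univ.erase i :=
    Finset.erase_subset_erase i (Finset.subset_univ T)
  have hset : (Finset.univ.erase i) \ (T.erase i) = (Finset.univ \ T).erase i := by
    ext j
    simp only [Finset.mem_sdiff, Finset.mem_erase, Finset.mem_univ, true_and, and_true]
    tauto
  rw [← Finset.sum_sdiff hsub, hset, add_comm]

/-- A DD matrix `A ∈ ℂⁿˣⁿ`, `n ≥ 2`, such that `T(A) = ∅` or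
the principal submatrix `A|_{T(A)²}` is SDD, is an H-matrix. -/
theorem dd_tset_sdd_hmatrix (n : ℕ) (hn : 2 ≤ n)
    (A : Matrix (Fin n) (Fin n) ℂ) (hDD : IsDD A)
    (h : TSet A = ∅ ∨ IsSDD (subMat A (TSet A))) :
    IsHMatrix A := by
  classical
  haveI : Nonempty (Fin n) := ⟨⟨0, by omega⟩⟩
  set T := TSet A with hTdef
  -- In every row indexed by T, the T-restricted row sum is strictly dominated.
  have hsub : ∀ i ∈ T, rowSumOn A T i < ‖A i i‖ := by
    intro i hi
    rcases h with h | h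
    · have : i ∈ (∅ : Finset (Fin n)) := h ▸ hi
      simp at this
    · have hs := h ⟨i, hi⟩
      have hrs : rowSum (subMat A T) ⟨i, hi⟩ = rowSumOn A T i := by
        unfold rowSum rowSumOn subMat
        rw [Finset.sum_erase_eq_sub (Finset.mem_univ _), Finset.sum_erase_eq_sub hi]
        congr 1
        exact Finset.sum_coe_sort T fun j => ‖A i j‖
      rw [hrs] at hs
      exact hs
  -- characterizations of membership in T
  have hmemT : ∀ i : Fin n, i ∈ T ↔ ‖A i i‖ ≤ rowSum A i := by
    intro i; simp [hTdef, TSet]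
  -- splitting of the full row sum
  have hsplit : ∀ i : Fin n,
      rowSum A i = rowSumOn A T i + rowSumOn A (Finset.univ \ T) i := by
    intro i
    unfold rowSum rowSumOn
    exact split_erase_sum T i _
  -- nonnegativity
  have hnn : ∀ (S : Finset (Fin n)) (i : Fin n), 0 ≤ rowSumOn A S i := by
    intro S i
    exact Finset.sum_nonneg fun j _ => (norm_nonneg _)
  -- choose the scaling factor t
  set ρ : Fin n → ℝ := fun i =>
    if i ∈ T then 0
    else rowSumOn A T i / (‖A i i‖ - rowSumOn A (Finset.univ \ T) i) with hρ
  have hDpos : ∀ i ∉ T,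
      rowSumOn A T i < ‖A i i‖ - rowSumOn A (Finset.univ \ T) i := by
    intro i hi
    have hlt : rowSum A i < ‖A i i‖ := by
      by_contra hcon
      exact hi ((hmemT i).2 (le_of_not_gt hcon))
    have := hsplit i
    linarith
  have hρ01 : ∀ i, 0 ≤ ρ i ∧ ρ i < 1 := by
    intro i
    by_cases hi : i ∈ T
    · simp [hρ, hi]
    · have hD := hDpos i hi
      have hDpos' : 0 < ‖A i i‖ - rowSumOn A (Finset.univ \ T) i :=
        lt_of_le_of_lt (hnn T i) hD
      constructor
      · simp only [hρ, if_neg hi]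
        exact div_nonneg (hnn T i) hDpos'.le
      · simp only [hρ, if_neg hi]
        exact (div_lt_one hDpos').2 hD
  set M : ℝ := Finset.univ.sup' Finset.univ_nonempty ρ with hM
  have hM0 : 0 ≤ M := le_trans (hρ01 (Classical.arbitrary (Fin n))).1
    (Finset.le_sup' ρ (Finset.mem_univ _))
  have hM1 : M < 1 := by
    rw [hM, Finset.sup'_lt_iff]
    intro i _
    exact (hρ01 i).2
  set t : ℝ := (1 + M) / 2 with ht
  have ht0 : 0 < t := by rw [ht]; linarith
  have ht1 : t < 1 := by rw [ht]; linarith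
  have hρt : ∀ i ∉ T, ρ i < t := by
    intro i _
    have : ρ i ≤ M := Finset.le_sup' ρ (Finset.mem_univ i)
    rw [ht]; linarith
  -- the scaling vector
  refine ⟨fun i => if i ∈ T then 1 else t, fun i => by by_cases hi : i ∈ T <;> simp [hi, ht0], ?_⟩
  intro i
  set d : Fin n → ℝ := fun i => if i ∈ T then 1 else t with hd
  have hdnn : ∀ j, 0 ≤ d j := fun j => by by_cases hj : j ∈ T <;> simp [hd, hj, ht0.le]
  -- compute the scaled row sum
  have habs : ∀ j, ‖(A * Matrix.diagonal fun k => ((d k : ℝ) : ℂ)) i j‖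
      = ‖A i j‖ * d j := by
    intro j
    rw [Matrix.mul_diagonal, norm_mul, Complex.norm_real, Real.norm_of_nonneg (hdnn j)]
  have hrow : rowSum (A * Matrix.diagonal fun k => ((d k : ℝ) : ℂ)) i
      = rowSumOn A T i + t * rowSumOn A (Finset.univ \ T) i := by
    unfold rowSum rowSumOn
    rw [Finset.sum_congr rfl fun j _ => habs j, split_erase_sum T i]
    congr 1
    · refine Finset.sum_congr rfl fun j hj => ?_
      have : j ∈ T := Finset.mem_of_mem_erase hj
      simp [hd, this]
    · rw [Finset.mul_sum]
      refine Finset.sum_congr rfl fun j hj => ?_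
      have : j ∉ T := (Finset.mem_sdiff.1 (Finset.mem_of_mem_erase hj)).2
      simp [hd, this, mul_comm]
  rw [hrow, habs]
  by_cases hi : i ∈ T
  · -- row in T
    have hd1 : d i = 1 := by simp [hd, hi]
    rw [hd1, mul_one]
    have h1 : rowSumOn A T i < ‖A i i‖ := hsub i hi
    have h2 : ‖A i i‖ ≤ rowSum A i := (hmemT i).1 hi
    have h3 : rowSum A i ≤ ‖A i i‖ := hDD i
    have h4 : rowSum A i = ‖A i i‖ := le_antisymm h3 h2
    have h5 := hsplit i
    -- out := rowSumOn A (univ \ T) i > 0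
    nlinarith [hnn (Finset.univ \ T) i]
  · -- row outside T
    have hdt : d i = t := by simp [hd, hi]
    rw [hdt]
    have hD := hDpos i hi
    have hDpos' : 0 < ‖A i i‖ - rowSumOn A (Finset.univ \ T) i :=
      lt_of_le_of_lt (hnn T i) hD
    have hρi : ρ i = rowSumOn A T i
        / (‖A i i‖ - rowSumOn A (Finset.univ \ T) i) := by
      simp [hρ, hi]
    have hlt : rowSumOn A T i
        < t * (‖A i i‖ - rowSumOn A (Finset.univ \ T) i) := by
      have := hρt i hi
      rw [hρi, div_lt_iff₀ hDpos'] at this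
      linarith [this]
    nlinarith

end
end

section
/- Let A = [a_ij] ∈ ℂ^{n×n}, n ≥ 2, and let S be a nonempty proper subset of N such that (i) the principal submatrix A|_{S²} is an H-matrix, and (ii) for every j ∈ S̄ = N \ S, ‖ℳ(A|_{S²})^{-1} · r^{S̄}(A)‖_∞ · r_j^S(A) < |a_jj| − r_j^{S̄}(A), where r^{S̄}(A) is the vector with components r_i^{S̄}(A) for i ∈ S. Then A is an H-matrix. -/
open scoped BigOperators

noncomputable section

lemma zmat_nonneg {m : Type*} [Fintype m] [DecidableEq m] [Nonempty m]
    (M : Matrix m m ℝ) (e : m → ℝ) (he : ∀ i, 0 < e i)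
    (hoff : ∀ i j, i ≠ j → M i j ≤ 0)
    (hdom : ∀ i, 0 < M.mulVec e i)
    (z : m → ℝ) (hz : ∀ i, 0 ≤ M.mulVec z i) : ∀ i, 0 ≤ z i := by
  by_contra hcon
  push_neg at hcon
  obtain ⟨i₁, hi₁⟩ := hcon
  obtain ⟨i₀, -, hmax⟩ := Finset.exists_max_image (Finset.univ : Finset m)
    (fun i => -z i / e i) ⟨i₁, Finset.mem_univ i₁⟩
  set c : ℝ := -z i₀ / e i₀ with hc
  have hcpos : 0 < c := by
    have h1 : -z i₁ / e i₁ ≤ c := hmax i₁ (Finset.mem_univ i₁)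
    have : 0 < -z i₁ / e i₁ := div_pos (by linarith) (he i₁)
    linarith
  have hzi₀ : z i₀ = -c * e i₀ := by
    rw [hc]
    field_simp
    rw [mul_div_assoc, div_self (ne_of_gt (he i₀)), mul_one]
  have hzj : ∀ j, -c * e j ≤ z j := by
    intro j
    have := hmax j (Finset.mem_univ j)
    rw [div_le_iff₀ (he j)] at this
    nlinarith [he j]
  have hneg : M.mulVec z i₀ < 0 := by
    have hle : M.mulVec z i₀ ≤ -c * M.mulVec e i₀ := by
      unfold Matrix.mulVec dotProduct
      rw [Finset.mul_sum]
      apply Finset.sum_le_sum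
      intro j _
      rcases eq_or_ne i₀ j with rfl | hne
      · rw [hzi₀]; ring_nf; exact le_of_eq rfl
      · have h1 := hoff i₀ j hne
        have h2 := hzj j
        nlinarith
    have : -c * M.mulVec e i₀ < 0 := by
      have := hdom i₀
      nlinarith
    linarith
  exact absurd (hz i₀) (not_le.mpr hneg)

lemma sum_erase_val {ι : Type*} [Fintype ι] [DecidableEq ι]
    (S : Finset ι) (i : ι) (hi : i ∈ S) (g : ι → ℝ) :
    ∑ j ∈ S.erase i, g j = ∑ j ∈ Finset.univ.erase (⟨i, hi⟩ : {x // x ∈ S}), g j.val := by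
  have h1 : (∑ j ∈ S.erase i, g j) + g i = ∑ j ∈ S, g j := Finset.sum_erase_add S g hi
  have h2 : (∑ j ∈ Finset.univ.erase (⟨i, hi⟩ : {x // x ∈ S}), g j.val) + g i =
      ∑ j : {x // x ∈ S}, g j.val := by
    simpa using Finset.sum_erase_add (Finset.univ) (fun j : {x // x ∈ S} => g j.val)
      (Finset.mem_univ ⟨i, hi⟩)
  have h3 : ∑ j : {x // x ∈ S}, g j.val = ∑ j ∈ S, g j := Finset.sum_coe_sort S g
  linarith

lemma erase_split {ι : Type*} [Fintype ι] [DecidableEq ι]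
    (S : Finset ι) (i : ι) (g : ι → ℝ) :
    ∑ j ∈ Finset.univ.erase i, g j = ∑ j ∈ S.erase i, g j + ∑ j ∈ Sᶜ.erase i, g j := by
  rw [← Finset.sum_union (Disjoint.mono (Finset.erase_subset _ _) (Finset.erase_subset _ _)
    disjoint_compl_right)]
  congr 1
  rw [← Finset.erase_union_distrib, Finset.union_compl]

/-- Huang. If `S` is a nonempty proper subset of `N` such that
`A|_{S²}` is an H-matrix and
`‖ℳ(A|_{S²})⁻¹ ⬝ r^{S̄}(A)‖_∞ ⬝ r_j^S(A) < |a_jj| − r_j^{S̄}(A)` for every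
`j ∈ S̄`, then `A` is an H-matrix. -/
theorem sh_matrix_is_hmatrix (n : ℕ) (hn : 2 ≤ n)
    (A : Matrix (Fin n) (Fin n) ℂ) (S : Finset (Fin n))
    (hS1 : S.Nonempty) (hS2 : S ≠ Finset.univ)
    (h1 : IsHMatrix (subMat A S))
    (h2 : ∀ j ∉ S,
      ‖Matrix.mulVec (CompMat (subMat A S))⁻¹ (fun i : {i // i ∈ S} => rowSumOn A Sᶜ i.val)‖ *
          rowSumOn A S j < ‖A j j‖ - rowSumOn A Sᶜ j) :
    IsHMatrix A := by
  classical
  obtain ⟨s0, hs0⟩ := hS1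
  haveI : Nonempty {i // i ∈ S} := ⟨⟨s0, hs0⟩⟩
  obtain ⟨e, hepos, heSDD⟩ := h1
  -- explicit SDD form for the scaled submatrix
  have habs : ∀ (i j : {x // x ∈ S}),
      ‖(subMat A S * Matrix.diagonal fun k => ((e k : ℝ) : ℂ)) i j‖
        = ‖A i.val j.val‖ * e j := by
    intro i j
    rw [Matrix.mul_diagonal, norm_mul, Complex.norm_of_nonneg (le_of_lt (hepos j))]
    rfl
  have hSDD' : ∀ i : {x // x ∈ S},
      ∑ j ∈ Finset.univ.erase i, ‖A i.val j.val‖ * e j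
        < ‖A i.val i.val‖ * e i := by
    intro i
    have h := heSDD i
    simp only [rowSum, rowSumOn] at h
    rw [Finset.sum_congr rfl (fun j _ => habs i j), habs i i] at h
    exact h
  -- explicit form of mulVec for the comparison matrix
  have hMv : ∀ (v : {x // x ∈ S} → ℝ) (i : {x // x ∈ S}),
      (CompMat (subMat A S)).mulVec v i
        = ‖A i.val i.val‖ * v i
          - ∑ j ∈ Finset.univ.erase i, ‖A i.val j.val‖ * v j := by
    intro v i
    have hsplit : (CompMat (subMat A S)).mulVec v i
        = CompMat (subMat A S) i i * v i
          + ∑ j ∈ Finset.univ.erase i, CompMat (subMat A S) i j * v j := by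
      unfold Matrix.mulVec dotProduct
      rw [← Finset.add_sum_erase _ _ (Finset.mem_univ i)]
    rw [hsplit]
    have hd : CompMat (subMat A S) i i = ‖A i.val i.val‖ := by
      simp [CompMat, subMat]
    have ho : ∀ j ∈ Finset.univ.erase i,
        CompMat (subMat A S) i j * v j = -(‖A i.val j.val‖ * v j) := by
      intro j hj
      have hji : j ≠ i := Finset.ne_of_mem_erase hj
      have : CompMat (subMat A S) i j = -‖A i.val j.val‖ := by
        unfold CompMat
        rw [Matrix.of_apply, if_neg (fun h => hji h.symm)]
        rfl
      rw [this]; ring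
    rw [Finset.sum_congr rfl ho, Finset.sum_neg_distrib, hd]
    ring
  have hoff : ∀ i j : {x // x ∈ S}, i ≠ j → CompMat (subMat A S) i j ≤ 0 := by
    intro i j hij
    have : CompMat (subMat A S) i j = -‖A i.val j.val‖ := by
      unfold CompMat
      rw [Matrix.of_apply, if_neg hij]
      rfl
    rw [this]
    simp [AbsoluteValue.nonneg]
  have hdom : ∀ i, 0 < (CompMat (subMat A S)).mulVec e i := by
    intro i
    rw [hMv]
    have := hSDD' i
    linarith
  -- the comparison matrix is invertible
  have hdet : IsUnit (CompMat (subMat A S)).det := by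
    rw [isUnit_iff_ne_zero]
    intro h0
    obtain ⟨v, hv0, hv⟩ := Matrix.exists_mulVec_eq_zero_iff.mpr h0
    have hnn1 : ∀ i, 0 ≤ v i := by
      refine zmat_nonneg _ e hepos hoff hdom v ?_
      intro i; rw [hv]; exact le_refl 0
    have hnn2 : ∀ i, 0 ≤ (-v) i := by
      refine zmat_nonneg _ e hepos hoff hdom (-v) ?_
      intro i; rw [Matrix.mulVec_neg, hv]; simp
    apply hv0
    funext i
    have h1 := hnn1 i
    have h2 := hnn2 i
    simp only [Pi.neg_apply] at h2
    have : v i = 0 := le_antisymm (by linarith) h1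
    simpa using this
  set r : {i // i ∈ S} → ℝ := fun i : {i // i ∈ S} => rowSumOn A Sᶜ i.val with hrdef
  set x : {i // i ∈ S} → ℝ := Matrix.mulVec (CompMat (subMat A S))⁻¹ r with hxdef
  have hx : (CompMat (subMat A S)).mulVec x = r := by
    rw [hxdef, Matrix.mulVec_mulVec, Matrix.mul_nonsing_inv _ hdet, Matrix.one_mulVec]
  have hrnn : ∀ i, 0 ≤ r i := by
    intro i
    exact Finset.sum_nonneg fun j _ => norm_nonneg _
  have hxnn : ∀ i, 0 ≤ x i := by
    refine zmat_nonneg _ e hepos hoff hdom x ?_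
    intro i; rw [hx]; exact hrnn i
  set μ : ℝ := ‖x‖ with hμdef
  have hμnn : 0 ≤ μ := norm_nonneg x
  have hxμ : ∀ i, x i ≤ μ := by
    intro i
    refine le_trans (le_abs_self _) ?_
    rw [← Real.norm_eq_abs]
    exact norm_le_pi_norm x i
  have h2' : ∀ j ∈ Sᶜ, 0 < ‖A j j‖ - rowSumOn A Sᶜ j - μ * rowSumOn A S j := by
    intro j hj
    have := h2 j (Finset.mem_compl.mp hj)
    linarith
  -- ambient versions of x and e
  set xx : Fin n → ℝ := fun i => if h : i ∈ S then x ⟨i, h⟩ else 0 with hxxdef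
  set ee : Fin n → ℝ := fun i => if h : i ∈ S then e ⟨i, h⟩ else 0 with heedef
  have hxxnn : ∀ i, 0 ≤ xx i := by
    intro i; rw [hxxdef]; dsimp only
    split
    · exact hxnn _
    · exact le_refl 0
  have heenn : ∀ i, 0 ≤ ee i := by
    intro i; rw [heedef]; dsimp only
    split
    · exact le_of_lt (hepos _)
    · exact le_refl 0
  have hxxμ : ∀ i, xx i ≤ μ := by
    intro i; rw [hxxdef]; dsimp only
    split
    · exact hxμ _
    · exact hμnn
  have hxid : ∀ (i : Fin n) (hi : i ∈ S),
      ‖A i i‖ * xx i - ∑ j ∈ S.erase i, ‖A i j‖ * xx j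
        = rowSumOn A Sᶜ i := by
    intro i hi
    have h1 := congrFun hx ⟨i, hi⟩
    rw [hMv] at h1
    rw [sum_erase_val S i hi (fun j => ‖A i j‖ * xx j)]
    have hxi : xx i = x ⟨i, hi⟩ := dif_pos hi
    have hterm : ∀ j ∈ Finset.univ.erase (⟨i, hi⟩ : {x // x ∈ S}),
        ‖A i j.val‖ * xx j.val = ‖A i j.val‖ * x j := by
      intro j _
      congr 1
      exact dif_pos j.prop
    rw [Finset.sum_congr rfl hterm, hxi]
    exact h1
  have heeid : ∀ (i : Fin n) (hi : i ∈ S),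
      ∑ j ∈ S.erase i, ‖A i j‖ * ee j < ‖A i i‖ * ee i := by
    intro i hi
    have h1 := hSDD' ⟨i, hi⟩
    rw [sum_erase_val S i hi (fun j => ‖A i j‖ * ee j)]
    have hei : ee i = e ⟨i, hi⟩ := dif_pos hi
    have hterm : ∀ j ∈ Finset.univ.erase (⟨i, hi⟩ : {x // x ∈ S}),
        ‖A i j.val‖ * ee j.val = ‖A i j.val‖ * e j := by
      intro j _
      congr 1
      exact dif_pos j.prop
    rw [Finset.sum_congr rfl hterm, hei]
    exact h1
  -- choice of ε
  have hTne : Sᶜ.Nonempty := by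
    have : ∃ j, j ∉ S := by
      by_contra hcon
      push_neg at hcon
      exact hS2 (Finset.eq_univ_iff_forall.mpr hcon)
    obtain ⟨j, hj⟩ := this
    exact ⟨j, Finset.mem_compl.mpr hj⟩
  set cc : Fin n → ℝ := fun j => ∑ k ∈ S, ‖A j k‖ * ee k with hccdef
  have hccnn : ∀ j, 0 ≤ cc j := by
    intro j
    exact Finset.sum_nonneg fun k _ => mul_nonneg (norm_nonneg _) (heenn k)
  obtain ⟨j₀, hj₀T, hmin⟩ := Finset.exists_min_image Sᶜ
    (fun j => (‖A j j‖ - rowSumOn A Sᶜ j - μ * rowSumOn A S j) / (cc j + 1)) hTne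
  set ε : ℝ := (‖A j₀ j₀‖ - rowSumOn A Sᶜ j₀ - μ * rowSumOn A S j₀) / (cc j₀ + 1)
    with hεdef
  have hεpos : 0 < ε := div_pos (h2' j₀ hj₀T) (by linarith [hccnn j₀])
  have hεcc : ∀ j ∈ Sᶜ, ε * cc j < ‖A j j‖ - rowSumOn A Sᶜ j - μ * rowSumOn A S j := by
    intro j hj
    have h3 := hmin j hj
    rw [le_div_iff₀ (by linarith [hccnn j] : (0:ℝ) < cc j + 1)] at h3
    nlinarith [hεpos]
  -- the diagonal scaling
  set d : Fin n → ℝ := fun i => if i ∈ S then xx i + ε * ee i else 1 with hddef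
  have hdpos : ∀ i, 0 < d i := by
    intro i
    rw [hddef]; dsimp only
    split
    · rename_i h
      have h1 : 0 < ee i := by
        rw [heedef]; dsimp only; rw [dif_pos h]; exact hepos _
      nlinarith [hxxnn i]
    · exact one_pos
  refine ⟨d, hdpos, ?_⟩
  intro i
  have hent : ∀ j, ‖(A * Matrix.diagonal fun k => ((d k : ℝ) : ℂ)) i j‖
      = ‖A i j‖ * d j := by
    intro j
    rw [Matrix.mul_diagonal, norm_mul, Complex.norm_of_nonneg (le_of_lt (hdpos j))]
  simp only [rowSum, rowSumOn]
  rw [Finset.sum_congr rfl (fun j _ => hent j), hent i]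
  rw [erase_split S i]
  by_cases hi : i ∈ S
  · have hdi : d i = xx i + ε * ee i := if_pos hi
    have hA : ∑ j ∈ S.erase i, ‖A i j‖ * d j
        = (∑ j ∈ S.erase i, ‖A i j‖ * xx j)
          + ε * ∑ j ∈ S.erase i, ‖A i j‖ * ee j := by
      rw [Finset.mul_sum, ← Finset.sum_add_distrib]
      apply Finset.sum_congr rfl
      intro j hj
      have hjS : j ∈ S := Finset.mem_of_mem_erase hj
      rw [hddef]; dsimp only; rw [if_pos hjS]; ring
    have hB : ∑ j ∈ Sᶜ.erase i, ‖A i j‖ * d j = rowSumOn A Sᶜ i := by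
      have hic : i ∉ Sᶜ := by simp [hi]
      rw [Finset.erase_eq_of_notMem hic, rowSumOn, Finset.erase_eq_of_notMem hic]
      apply Finset.sum_congr rfl
      intro j hj
      have hjS : j ∉ S := Finset.mem_compl.mp hj
      rw [hddef]; dsimp only; rw [if_neg hjS, mul_one]
    have h3 := hxid i hi
    have h4 := heeid i hi
    have h5 : ε * (∑ j ∈ S.erase i, ‖A i j‖ * ee j)
        < ε * (‖A i i‖ * ee i) := by
      exact mul_lt_mul_of_pos_left h4 hεpos
    have hexp : ‖A i i‖ * (xx i + ε * ee i)
        = ‖A i i‖ * xx i + ε * (‖A i i‖ * ee i) := by ring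
    rw [hA, hB, hdi, hexp]
    linarith
  · have hdi : d i = 1 := if_neg hi
    have hSe : S.erase i = S := Finset.erase_eq_of_notMem hi
    have hA : ∑ j ∈ S, ‖A i j‖ * d j ≤ μ * rowSumOn A S i + ε * cc i := by
      rw [rowSumOn, hSe, hccdef]
      dsimp only
      rw [Finset.mul_sum, Finset.mul_sum, ← Finset.sum_add_distrib]
      apply Finset.sum_le_sum
      intro j hj
      rw [hddef]; dsimp only; rw [if_pos hj]
      have h6 := hxxμ j
      have h7 := norm_nonneg (A i j)
      nlinarith
    have hB : ∑ j ∈ Sᶜ.erase i, ‖A i j‖ * d j = rowSumOn A Sᶜ i := by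
      rw [rowSumOn]
      apply Finset.sum_congr rfl
      intro j hj
      have hjS : j ∉ S := Finset.mem_compl.mp (Finset.mem_of_mem_erase hj)
      rw [hddef]; dsimp only; rw [if_neg hjS, mul_one]
    have h3 := hεcc i (Finset.mem_compl.mpr hi)
    rw [hSe, hB, hdi, mul_one]
    linarith

end
end

section
/- Let A = [a_ij] ∈ ℂ^{n×n}, n ≥ 2, be a DD matrix such that T(A) ≠ ∅. If the principal submatrix A|_{T(A)²} is SDD by columns, then A is an H-matrix. -/
open scoped BigOperators

noncomputable section

open Matrix in
lemma exists_pos_mulVec_pos {m : Type*} [Fintype m] [DecidableEq m]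
    (C : Matrix m m ℝ)
    (hoff : ∀ i j, i ≠ j → C i j ≤ 0)
    (hcol : ∀ j, ∑ i ∈ Finset.univ.erase j, (-(C i j)) < C j j) :
    ∃ y : m → ℝ, (∀ i, 0 < y i) ∧ ∀ i, 0 < (C *ᵥ y) i := by
  classical
  have hdiag : ∀ j, 0 < C j j := fun j =>
    lt_of_le_of_lt (Finset.sum_nonneg fun i hi =>
      neg_nonneg.mpr (hoff i j (Finset.ne_of_mem_erase hi))) (hcol j)
  set Ct : ℝ → Matrix m m ℝ :=
    fun t => Matrix.of fun i j => if i = j then C i j else t * C i j with hCtdef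
  have hdet : ∀ t ∈ Set.Icc (0:ℝ) 1, (Ct t).det ≠ 0 := by
    intro t ht
    apply det_ne_zero_of_sum_col_lt_diag
    intro k
    have h1 : ∑ i ∈ Finset.univ.erase k, ‖(Ct t) i k‖ ≤
        ∑ i ∈ Finset.univ.erase k, (-(C i k)) := by
      apply Finset.sum_le_sum
      intro i hi
      have hik : i ≠ k := Finset.ne_of_mem_erase hi
      have hC : C i k ≤ 0 := hoff i k hik
      simp only [hCtdef, Matrix.of_apply, if_neg hik, Real.norm_eq_abs]
      rw [abs_mul, abs_of_nonneg ht.1, abs_of_nonpos hC]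
      nlinarith [ht.2]
    have h2 : ‖(Ct t) k k‖ = C k k := by
      simp only [hCtdef, Matrix.of_apply, if_pos rfl, Real.norm_eq_abs]
      exact abs_of_pos (hdiag k)
    rw [h2]
    exact lt_of_le_of_lt h1 (hcol k)
  set x : ℝ → m → ℝ := fun t => (Ct t)⁻¹ *ᵥ (fun _ => (1:ℝ)) with hxdef
  have hxeq : ∀ t ∈ Set.Icc (0:ℝ) 1, (Ct t) *ᵥ x t = fun _ => (1:ℝ) := by
    intro t ht
    rw [hxdef]
    rw [Matrix.mulVec_mulVec, Matrix.mul_nonsing_inv _ (isUnit_iff_ne_zero.mpr (hdet t ht)),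
      Matrix.one_mulVec]
  have hxsum : ∀ t ∈ Set.Icc (0:ℝ) 1, ∀ i, ∑ j, (Ct t) i j * x t j = 1 := by
    intro t ht i
    have := congrFun (hxeq t ht) i
    simpa [Matrix.mulVec, dotProduct] using this
  -- key positivity upgrade
  have hpos : ∀ t ∈ Set.Icc (0:ℝ) 1, (∀ i, 0 ≤ x t i) → ∀ i, 0 < x t i := by
    intro t ht hnn i
    have hsum := hxsum t ht i
    rw [← Finset.add_sum_erase _ _ (Finset.mem_univ i)] at hsum
    have hCtii : (Ct t) i i = C i i := by simp [hCtdef]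
    have hrest : ∑ j ∈ Finset.univ.erase i, (Ct t) i j * x t j ≤ 0 := by
      apply Finset.sum_nonpos
      intro j hj
      have hij : i ≠ j := (Finset.ne_of_mem_erase hj).symm
      have : (Ct t) i j = t * C i j := by simp [hCtdef, hij]
      rw [this]
      nlinarith [mul_nonneg ht.1 (hnn j), hoff i j hij]
    rw [hCtii] at hsum
    nlinarith [hdiag i, hnn i]
  -- continuity
  have hCtcont : Continuous Ct := by
    apply continuous_matrix
    intro i j
    by_cases hij : i = j
    · simpa [hCtdef, hij] using continuous_const
    · simpa [hCtdef, hij] using (continuous_mul_right (C i j))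
  have hxcont : ContinuousOn x (Set.Icc (0:ℝ) 1) := by
    have h1 : ∀ t ∈ Set.Icc (0:ℝ) 1,
        x t = ((Ct t).det)⁻¹ • ((Ct t).adjugate *ᵥ (fun _ => (1:ℝ))) := by
      intro t ht
      show (Ct t)⁻¹ *ᵥ (fun _ => (1:ℝ)) = _
      rw [Matrix.inv_def, Ring.inverse_eq_inv', Matrix.smul_mulVec]
    apply ContinuousOn.congr (f := fun t => ((Ct t).det)⁻¹ • ((Ct t).adjugate *ᵥ (fun _ => (1:ℝ)))) _ h1
    apply ContinuousOn.fun_smul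
    · exact (hCtcont.matrix_det.continuousOn).inv₀ hdet
    · exact (hCtcont.matrix_adjugate.matrix_mulVec continuous_const).continuousOn
  -- clopen argument
  haveI : PreconnectedSpace (Set.Icc (0:ℝ) 1) := Subtype.preconnectedSpace isPreconnected_Icc
  set f : Set.Icc (0:ℝ) 1 → m → ℝ := fun t => x t.val with hfdef
  have hf : Continuous f := hxcont.restrict
  set U : Set (Set.Icc (0:ℝ) 1) := {t | ∀ i, 0 ≤ f t i} with hUdef
  have hUeq : U = {t | ∀ i, 0 < f t i} := by
    apply subset_antisymm
    · intro t ht i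
      exact hpos t.val t.2 ht i
    · intro t ht i
      exact le_of_lt (ht i)
  have hUclosed : IsClosed U := by
    rw [hUdef, Set.setOf_forall]
    exact isClosed_iInter fun i => isClosed_le continuous_const ((continuous_apply i).comp hf)
  have hUopen : IsOpen U := by
    rw [hUeq, Set.setOf_forall]
    exact isOpen_iInter_of_finite fun i =>
      isOpen_lt continuous_const ((continuous_apply i).comp hf)
  have h0mem : (⟨0, by norm_num⟩ : Set.Icc (0:ℝ) 1) ∈ U := by
    intro i
    have hsum := hxsum 0 (by norm_num) i
    have : ∑ j, (Ct 0) i j * x 0 j = C i i * x 0 i := by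
      rw [Finset.sum_eq_single i]
      · simp [hCtdef]
      · intro j _ hji
        simp [hCtdef, (Ne.symm hji : i ≠ j)]
      · intro h; exact absurd (Finset.mem_univ i) h
    rw [this] at hsum
    have : 0 < x 0 i := by nlinarith [hdiag i]
    exact le_of_lt this
  have hUuniv : U = Set.univ := IsClopen.eq_univ ⟨hUclosed, hUopen⟩ ⟨_, h0mem⟩
  have h1mem : ∀ i, 0 < x 1 i := by
    have : (⟨1, by norm_num⟩ : Set.Icc (0:ℝ) 1) ∈ U := hUuniv ▸ Set.mem_univ _
    exact hpos 1 (by norm_num) this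
  have hCt1 : Ct 1 = C := by
    ext i j
    by_cases hij : i = j <;> simp [hCtdef, hij]
  refine ⟨x 1, h1mem, ?_⟩
  intro i
  have := hxeq 1 (by norm_num)
  rw [hCt1] at this
  rw [this]
  norm_num


/-- Lemma. A DD matrix `A ∈ ℂⁿˣⁿ`, `n ≥ 2`, with
`T(A) ≠ ∅` whose principal submatrix `A|_{T(A)²}` is SDD by columns,
is an H-matrix. -/
theorem dd_tset_sdd_columns_hmatrix (n : ℕ) (hn : 2 ≤ n)
    (A : Matrix (Fin n) (Fin n) ℂ) (hDD : IsDD A)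
    (hT : TSet A ≠ ∅)
    (hcol : IsSDD (subMat A (TSet A)).transpose) :
    IsHMatrix A := by
  classical
  set T := TSet A with hTdef
  have hmemT : ∀ i, i ∈ T ↔ ‖A i i‖ ≤ rowSum A i := by
    intro i; simp [hTdef, TSet]
  have heq : ∀ i ∈ T, ‖A i i‖ = rowSum A i :=
    fun i hi => le_antisymm ((hmemT i).1 hi) (hDD i)
  have hnotT : ∀ i, i ∉ T → rowSum A i < ‖A i i‖ := by
    intro i hi
    exact not_le.mp fun h => hi ((hmemT i).2 h)
  have hint : ∀ i : Fin n, Finset.univ.erase i ∩ T = T.erase i := by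
    intro i; ext x
    simp only [Finset.mem_inter, Finset.mem_erase, Finset.mem_univ, and_true, true_and]
  -- column dominance at ambient indices
  have hcolF : ∀ i, i ∈ T → ∑ j ∈ T.erase i, ‖A j i‖ < ‖A i i‖ := by
    intro i hi
    have h := hcol ⟨i, hi⟩
    unfold rowSum rowSumOn at h
    simp only [Matrix.transpose_apply, subMat, Matrix.of_apply] at h
    rw [Finset.sum_erase_eq_sub (Finset.mem_univ _)] at h
    rw [Finset.sum_erase_eq_sub hi]
    rw [← Finset.sum_coe_sort T (fun j => ‖A j i‖)]
    exact h
  -- the comparison-type matrix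
  set Cm : Matrix (Fin n) (Fin n) ℝ := Matrix.of fun i j =>
    if i = j then (if i ∈ T then ‖A i i‖ else 1)
    else (if i ∈ T ∧ j ∈ T then -‖A i j‖ else 0) with hCmdef
  have hoffC : ∀ i j, i ≠ j → Cm i j ≤ 0 := by
    intro i j hij
    simp only [hCmdef, Matrix.of_apply, if_neg hij]
    split
    · exact neg_nonpos.mpr (norm_nonneg _)
    · exact le_refl 0
  have hcolC : ∀ j, ∑ i ∈ Finset.univ.erase j, (-(Cm i j)) < Cm j j := by
    intro j
    by_cases hj : j ∈ T
    · have hstep : ∀ i ∈ Finset.univ.erase j,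
          -(Cm i j) = if i ∈ T then ‖A i j‖ else 0 := by
        intro i hi
        have hij : i ≠ j := Finset.ne_of_mem_erase hi
        simp only [hCmdef, Matrix.of_apply, if_neg hij, hj, and_true]
        split <;> simp
      rw [Finset.sum_congr rfl hstep, Finset.sum_ite_mem, hint j]
      have hd : Cm j j = ‖A j j‖ := by simp [hCmdef, hj]
      rw [hd]
      exact hcolF j hj
    · have hstep : ∀ i ∈ Finset.univ.erase j, -(Cm i j) = 0 := by
        intro i hi
        have hij : i ≠ j := Finset.ne_of_mem_erase hi
        simp [hCmdef, if_neg hij, hj]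
      rw [Finset.sum_congr rfl hstep]
      have hd : Cm j j = 1 := by simp [hCmdef, hj]
      rw [hd]
      simp
  obtain ⟨y, hypos, hCy⟩ := exists_pos_mulVec_pos Cm hoffC hcolC
  have keyT : ∀ i, i ∈ T →
      ∑ j ∈ T.erase i, ‖A i j‖ * y j < ‖A i i‖ * y i := by
    intro i hi
    have h := hCy i
    have hexp : Cm.mulVec y i =
        ‖A i i‖ * y i - ∑ j ∈ T.erase i, ‖A i j‖ * y j := by
      show ∑ j, Cm i j * y j = _
      rw [← Finset.add_sum_erase _ (fun j => Cm i j * y j) (Finset.mem_univ i)]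
      have h1 : Cm i i = ‖A i i‖ := by simp [hCmdef, hi]
      have h2 : ∀ j ∈ Finset.univ.erase i,
          Cm i j * y j = if j ∈ T then -(‖A i j‖ * y j) else 0 := by
        intro j hj
        have hij : j ≠ i := Finset.ne_of_mem_erase hj
        rw [show Cm i j = (if j ∈ T then -‖A i j‖ else 0) from by
          simp [hCmdef, Ne.symm hij, hi]]
        split <;> ring
      rw [Finset.sum_congr rfl h2, Finset.sum_ite_mem, hint i, h1]
      have : ∑ j ∈ T.erase i, -(‖A i j‖ * y j)
          = -∑ j ∈ T.erase i, ‖A i j‖ * y j := by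
        rw [Finset.sum_neg_distrib]
      rw [this]
      ring
    rw [hexp] at h
    linarith
  set Y : Fin n → ℝ := fun j => if j ∈ T then y j else 0 with hYdef
  have hY0 : ∀ j, 0 ≤ Y j := by
    intro j
    simp only [hYdef]
    split
    · exact le_of_lt (hypos _)
    · exact le_refl 0
  set K : Fin n → ℝ := fun i => ∑ j ∈ Finset.univ.erase i, ‖A i j‖ * Y j with hKdef
  have hK0 : ∀ i, 0 ≤ K i := fun i =>
    Finset.sum_nonneg fun j _ => mul_nonneg (norm_nonneg _) (hY0 j)
  have hKT : ∀ i, i ∈ T → K i = ∑ j ∈ T.erase i, ‖A i j‖ * y j := by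
    intro i hi
    simp only [hKdef]
    have h2 : ∀ j ∈ Finset.univ.erase i,
        ‖A i j‖ * Y j = if j ∈ T then ‖A i j‖ * y j else 0 := by
      intro j _
      simp only [hYdef]
      split <;> simp
    rw [Finset.sum_congr rfl h2, Finset.sum_ite_mem, hint i]
  have hne : (Finset.univ : Finset (Fin n)).Nonempty := ⟨⟨0, by omega⟩, Finset.mem_univ _⟩
  set f : Fin n → ℝ := fun i =>
    if i ∈ T then 1 else (‖A i i‖ - rowSum A i) / (K i + 1) with hfdef
  have hfpos : ∀ i, 0 < f i := by
    intro i
    simp only [hfdef]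
    split
    · norm_num
    · next hi => exact div_pos (sub_pos.mpr (hnotT i hi)) (by linarith [hK0 i])
  set ε := Finset.univ.inf' hne f with hεdef
  have hεpos : 0 < ε := (Finset.lt_inf'_iff _).mpr fun i _ => hfpos i
  have hεle : ∀ i, ε ≤ f i := fun i => Finset.inf'_le f (Finset.mem_univ i)
  have hdpos : ∀ j, 0 < 1 + ε * Y j := by
    intro j
    have := mul_nonneg (le_of_lt hεpos) (hY0 j)
    linarith
  refine ⟨fun j => 1 + ε * Y j, hdpos, ?_⟩
  intro i
  have hentry : ∀ k, ‖(A * Matrix.diagonal fun j => ((1 + ε * Y j : ℝ) : ℂ)) i k‖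
      = ‖A i k‖ * (1 + ε * Y k) := by
    intro k
    rw [Matrix.mul_diagonal, norm_mul, Complex.norm_real, Real.norm_eq_abs, abs_of_pos (hdpos k)]
  have hLHS : rowSum (A * Matrix.diagonal fun j => ((1 + ε * Y j : ℝ) : ℂ)) i
      = rowSum A i + ε * K i := by
    unfold rowSum rowSumOn
    simp only [hKdef]
    rw [Finset.mul_sum, ← Finset.sum_add_distrib]
    refine Finset.sum_congr rfl fun j _ => ?_
    rw [hentry j]
    ring
  show rowSum (A * Matrix.diagonal fun j => ((1 + ε * Y j : ℝ) : ℂ)) i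
      < ‖(A * Matrix.diagonal fun j => ((1 + ε * Y j : ℝ) : ℂ)) i i‖
  rw [hLHS, hentry i]
  by_cases hi : i ∈ T
  · have hYi : Y i = y i := by simp only [hYdef]; rw [if_pos hi]
    have h2 : K i < ‖A i i‖ * y i := by
      rw [hKT i hi]; exact keyT i hi
    have h3 : ε * K i < ε * (‖A i i‖ * y i) := mul_lt_mul_of_pos_left h2 hεpos
    rw [hYi]
    have h4 := heq i hi
    nlinarith
  · have hYi : Y i = 0 := by simp only [hYdef]; rw [if_neg hi]
    have h4 := hεle i
    simp only [hfdef] at h4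
    rw [if_neg hi] at h4
    have h5 : ε * (K i + 1) ≤ ‖A i i‖ - rowSum A i :=
      (le_div_iff₀ (by linarith [hK0 i] : (0:ℝ) < K i + 1)).mp h4
    rw [hYi]
    nlinarith


end
end

section
/- Let A = [a_ij] ∈ ℂ^{n×n}, n ≥ 2, be a DD matrix. Then A is an H-matrix if and only if T(A) = ∅, or the principal submatrix A|_{T(A)²} is an H-matrix. -/
open scoped BigOperators

noncomputable section

section auxLemmas

variable {ι : Type*} [Fintype ι] [DecidableEq ι]

lemma rowSum_mul_diag (A : Matrix ι ι ℂ) (d : ι → ℝ) (hd : ∀ i, 0 ≤ d i) (i : ι) :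
    rowSum (A * Matrix.diagonal fun j => (d j : ℂ)) i
      = ∑ j ∈ Finset.univ.erase i, ‖A i j‖ * d j := by
  unfold rowSum rowSumOn
  refine Finset.sum_congr rfl fun j _ => ?_
  rw [Matrix.mul_diagonal, norm_mul, Complex.norm_real, Real.norm_of_nonneg (hd j)]

lemma abs_mul_diag (A : Matrix ι ι ℂ) (d : ι → ℝ) (hd : ∀ i, 0 ≤ d i) (i : ι) :
    ‖(A * Matrix.diagonal fun j => (d j : ℂ)) i i‖
      = ‖A i i‖ * d i := by
  rw [Matrix.mul_diagonal, norm_mul, Complex.norm_real, Real.norm_of_nonneg (hd i)]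

lemma sum_erase_subtype (T : Finset ι) (i : {x // x ∈ T}) (f : ι → ℝ) :
    ∑ j ∈ (Finset.univ : Finset {x // x ∈ T}).erase i, f j.val
      = ∑ j ∈ T.erase i.val, f j := by
  rw [Finset.sum_erase_eq_sub (Finset.mem_univ i), Finset.sum_erase_eq_sub i.property,
      Finset.univ_eq_attach, Finset.sum_attach]

end auxLemmas

/-- main characterization. A DD matrix `A ∈ ℂⁿˣⁿ`, `n ≥ 2`,
is an H-matrix iff `T(A) = ∅` or the principal submatrix `A|_{T(A)²}` is an
H-matrix. -/
theorem dd_hmatrix_iff_tset_hmatrix (n : ℕ) (hn : 2 ≤ n)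
    (A : Matrix (Fin n) (Fin n) ℂ) (hDD : IsDD A) :
    IsHMatrix A ↔ (TSet A = ∅ ∨ IsHMatrix (subMat A (TSet A))) := by
  classical
  constructor
  · rintro ⟨d, hd, hsdd⟩
    right
    refine ⟨fun i => d i.val, fun i => hd _, fun i => ?_⟩
    beta_reduce
    have h1 : rowSum (subMat A (TSet A) * Matrix.diagonal fun j => ((d j.val : ℝ) : ℂ)) i
        = ∑ j ∈ (TSet A).erase i.val, ‖A i.val j‖ * d j := by
      rw [rowSum_mul_diag _ _ (fun j => (hd j.val).le) i]
      exact sum_erase_subtype (TSet A) i (fun j => ‖A i.val j‖ * d j)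
    rw [h1, abs_mul_diag (subMat A (TSet A)) (fun j => d j.val)
        (fun j => (hd j.val).le) i]
    have h2 : ∑ j ∈ (TSet A).erase i.val, ‖A i.val j‖ * d j
        ≤ ∑ j ∈ Finset.univ.erase i.val, ‖A i.val j‖ * d j := by
      apply Finset.sum_le_sum_of_subset_of_nonneg
      · exact Finset.erase_subset_erase _ (Finset.subset_univ _)
      · intro j _ _; exact mul_nonneg (norm_nonneg _) (hd j).le
    have h3 := hsdd i.val
    rw [rowSum_mul_diag A d (fun j => (hd j).le),
        abs_mul_diag A d (fun j => (hd j).le)] at h3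
    exact lt_of_le_of_lt h2 h3
  · rintro (hT | ⟨d', hd', hsdd'⟩)
    · refine ⟨fun _ => 1, fun _ => one_pos, fun i => ?_⟩
      have hi : i ∉ TSet A := by simp [hT]
      have hi' : rowSum A i < ‖A i i‖ := by
        by_contra h
        exact hi (Finset.mem_filter.mpr ⟨Finset.mem_univ i, not_lt.mp h⟩)
      rw [rowSum_mul_diag A _ (fun _ => zero_le_one),
          abs_mul_diag A _ (fun _ => zero_le_one)]
      simpa [rowSum, rowSumOn] using hi'
    · set u : Fin n → ℝ := fun j => if h : j ∈ TSet A then d' ⟨j, h⟩ else 0 with hu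
      have hu_nonneg : ∀ j, 0 ≤ u j := by
        intro j
        by_cases h : j ∈ TSet A
        · simp only [hu, dif_pos h]; exact (hd' _).le
        · simp [hu, h]
      set C : Fin n → ℝ := fun i => ∑ j ∈ Finset.univ.erase i, ‖A i j‖ * u j
        with hC
      have hC_nonneg : ∀ i, 0 ≤ C i := fun i =>
        Finset.sum_nonneg fun j _ => mul_nonneg (norm_nonneg _) (hu_nonneg j)
      set εf : Fin n → ℝ :=
        fun i => if i ∈ TSet A then 1 else (‖A i i‖ - rowSum A i) / (C i + 1)
        with hεf
      have hgap : ∀ i ∉ TSet A, 0 < ‖A i i‖ - rowSum A i := by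
        intro i hi
        have h : ¬ (‖A i i‖ ≤ rowSum A i) := by
          intro hle
          exact hi (Finset.mem_filter.mpr ⟨Finset.mem_univ i, hle⟩)
        linarith [not_le.mp h]
      have hεf_pos : ∀ i, 0 < εf i := by
        intro i
        by_cases h : i ∈ TSet A
        · simp [hεf, h]
        · simp only [hεf, if_neg h]
          exact div_pos (hgap i h) (by linarith [hC_nonneg i])
      have hne : (Finset.univ : Finset (Fin n)).Nonempty :=
        ⟨⟨0, by omega⟩, Finset.mem_univ _⟩
      set ε := Finset.univ.inf' hne εf with hε
      have hε_pos : 0 < ε := (Finset.lt_inf'_iff hne).mpr fun i _ => hεf_pos i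
      have hε_le : ∀ i ∉ TSet A, ε * C i < ‖A i i‖ - rowSum A i := by
        intro i hi
        have h1 : ε ≤ εf i := Finset.inf'_le _ (Finset.mem_univ i)
        have h2 : εf i = (‖A i i‖ - rowSum A i) / (C i + 1) := if_neg hi
        have hCn := hC_nonneg i
        have hg := hgap i hi
        calc ε * C i ≤ (‖A i i‖ - rowSum A i) / (C i + 1) * C i := by
              apply mul_le_mul_of_nonneg_right _ hCn
              rw [← h2]; exact h1
          _ < ‖A i i‖ - rowSum A i := by
              rw [div_mul_eq_mul_div, div_lt_iff₀ (by linarith)]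
              nlinarith
      have hd_nonneg : ∀ i, (0:ℝ) ≤ 1 + ε * u i := fun i => by
        have := mul_nonneg hε_pos.le (hu_nonneg i); linarith
      refine ⟨fun i => 1 + ε * u i, fun i => by
        show (0:ℝ) < 1 + ε * u i
        have := mul_nonneg hε_pos.le (hu_nonneg i); linarith, fun i => ?_⟩
      beta_reduce
      rw [rowSum_mul_diag A (fun i => 1 + ε * u i) hd_nonneg i,
          abs_mul_diag A (fun i => 1 + ε * u i) hd_nonneg i]
      have hrow : ∑ j ∈ Finset.univ.erase i, ‖A i j‖ * (1 + ε * u j)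
          = rowSum A i + ε * C i := by
        simp only [mul_add, mul_one, Finset.sum_add_distrib]
        congr 1
        rw [hC, Finset.mul_sum]
        exact Finset.sum_congr rfl fun j _ => by ring
      rw [hrow]
      by_cases hiT : i ∈ TSet A
      · -- row in T
        have hui : u i = d' ⟨i, hiT⟩ := dif_pos hiT
        have heq : rowSum A i = ‖A i i‖ := by
          have h1 := hDD i
          have h2 : ‖A i i‖ ≤ rowSum A i :=
            (Finset.mem_filter.mp hiT).2
          linarith
        have hCT : C i = ∑ j ∈ (TSet A).erase i, ‖A i j‖ * u j := by
          rw [hC]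
          refine (Finset.sum_subset
            (Finset.erase_subset_erase _ (Finset.subset_univ _)) ?_).symm
          intro j hj hjT
          have hj' : j ∉ TSet A := fun hT' =>
            hjT (Finset.mem_erase.mpr ⟨(Finset.mem_erase.mp hj).1, hT'⟩)
          simp [hu, hj']
        have hCsub : C i = ∑ j ∈ (Finset.univ : Finset {x // x ∈ TSet A}).erase ⟨i, hiT⟩,
            ‖A i j.val‖ * d' j := by
          rw [hCT, ← sum_erase_subtype (TSet A) ⟨i, hiT⟩
            (fun j => ‖A i j‖ * u j)]
          refine Finset.sum_congr rfl fun j _ => ?_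
          have hj : (j : Fin n) ∈ TSet A := j.property
          simp [hu, hj]
        have hCi : C i < ‖A i i‖ * d' ⟨i, hiT⟩ := by
          have h3 := hsdd' ⟨i, hiT⟩
          rw [rowSum_mul_diag (subMat A (TSet A)) d' (fun j => (hd' j).le) ⟨i, hiT⟩,
              abs_mul_diag (subMat A (TSet A)) d' (fun j => (hd' j).le) ⟨i, hiT⟩] at h3
          rw [hCsub]
          exact h3
        have hmul : ε * C i < ε * (‖A i i‖ * d' ⟨i, hiT⟩) :=
          (mul_lt_mul_iff_right₀ hε_pos).mpr hCi
        have hrhs : ‖A i i‖ * (1 + ε * u i)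
            = ‖A i i‖ + ε * (‖A i i‖ * d' ⟨i, hiT⟩) := by
          rw [hui]; ring
        rw [hrhs, heq]
        linarith
      · -- row not in T
        have hui : u i = 0 := dif_neg hiT
        have hle := hε_le i hiT
        rw [hui]
        have : ‖A i i‖ * (1 + ε * 0) = ‖A i i‖ := by ring
        rw [this]
        linarith

end
end
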